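/- arXiv:1410.2640 — 6 statements merged into one kernel-verified Lean document; each statement's English description precedes it below -/
import Mathlib

section
/- There is a constant c > 0 with the following property. Let d be a positive integer, let ε be a real number with 1/d ≤ ε ≤ 1/8, and let M be a natural number. Suppose that for every number of rows n there exists an (ε, M)-Itemset-Frequency-Indicator sketching scheme for pairs on d items and n rows (with randomized encoder succeeding with probability at least 3/4). Then M ≥ c · (d/ε) · log(ε·d). -/
/-- The frequency of an itemset `T` in a database `D` with `n` rows over `d` items:
the fraction of rows in which every item of `T` occurs. -/
noncomputable def freq {n d : ℕ} (D : Fin n → Fin d → Bool) (T : Finset (Fin d)) : ℝ :=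
  ((Finset.univ.filter (fun i : Fin n => ∀ j ∈ T, D i j = true)).card : ℝ) / n

/-- The decoder `Dec` answers all pairwise queries correctly on sketch `s` for database `D`
at threshold `ε`. -/
def DecCorrect {n d : ℕ} {σ : Type*} (ε : ℝ) (D : Fin n → Fin d → Bool)
    (Dec : σ → Fin d → Fin d → Bool) (s : σ) : Prop :=
  ∀ a b : Fin d, a ≠ b →
    (freq D {a, b} ≥ ε → Dec s a b = true) ∧
    (freq D {a, b} ≤ ε / 2 → Dec s a b = false)

/-- An `(ε, M)`-Itemset-Frequency-Indicator sketching scheme for pairs on `d` items and `n`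
rows: a randomized encoder into `M`-bit sketches and a decoder such that, for every database,
with probability at least `3/4` over the sketch, all pairwise queries are answered correctly. -/
def IFIScheme (d n M : ℕ) (ε : ℝ) : Prop :=
  ∃ (Enc : (Fin n → Fin d → Bool) → PMF (Fin (2 ^ M)))
    (Dec : Fin (2 ^ M) → Fin d → Fin d → Bool),
    ∀ D : Fin n → Fin d → Bool,
      (3 / 4 : ENNReal) ≤ (Enc D).toOuterMeasure {s | DecCorrect ε D Dec s}

lemma card_zeroOn {α : Type*} [Fintype α] [DecidableEq α] {K : ℕ} (z : Fin K) (s : Finset α) :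
    Fintype.card {x : α → Fin K // ∀ a ∈ s, x a = z} = K ^ (Fintype.card α - s.card) := by
  have e : {x : α → Fin K // ∀ a ∈ s, x a = z} ≃ ({a // a ∉ s} → Fin K) :=
    { toFun := fun x a => x.1 a.1
      invFun := fun y => ⟨fun a => if h : a ∈ s then z else y ⟨a, h⟩, fun a ha => by simp [ha]⟩
      left_inv := fun x => by
        ext a
        by_cases h : a ∈ s
        · simp [h, x.2 a h]
        · simp [h]
      right_inv := fun y => by
        ext a
        simp [a.2] }
  rw [Fintype.card_congr e, Fintype.card_fun, Fintype.card_fin]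
  congr 1
  have e2 : {a // a ∉ s} ≃ (↑(sᶜ) : Finset α) := Equiv.subtypeEquivRight (by simp)
  rw [Fintype.card_congr e2, Fintype.card_coe, Finset.card_compl]

lemma pow_le_descFactorial (n : ℕ) : ∀ k : ℕ, (n + 1 - k) ^ k ≤ n.descFactorial k
  | 0 => by simp
  | (k + 1) => by
    rw [Nat.descFactorial_succ]
    have h0 : n + 1 - (k + 1) = n - k := by omega
    rw [h0, pow_succ']
    refine Nat.mul_le_mul_left _ ?_
    calc (n - k) ^ k ≤ (n + 1 - k) ^ k := Nat.pow_le_pow_left (by omega) k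
      _ ≤ n.descFactorial k := pow_le_descFactorial n k

lemma pow_le_choose_mul (n k : ℕ) : (n + 1 - k) ^ k ≤ k ^ k * n.choose k := by
  calc (n + 1 - k) ^ k ≤ n.descFactorial k := pow_le_descFactorial n k
    _ = Nat.factorial k * n.choose k := Nat.descFactorial_eq_factorial_mul_choose n k
    _ ≤ k ^ k * n.choose k := Nat.mul_le_mul_right _ (Nat.factorial_le_pow k)

lemma card_zeroOn' {α : Type*} [Fintype α] [DecidableEq α] {K : ℕ} (z : Fin K) (s : Finset α)
    {p : (α → Fin K) → Prop} [DecidablePred p] (hp : ∀ x, p x ↔ ∀ a ∈ s, x a = z) :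
    (Finset.univ.filter p).card = K ^ (Fintype.card α - s.card) := by
  rw [← Fintype.card_subtype]
  exact (Fintype.card_congr (Equiv.subtypeEquivRight hp)).trans (card_zeroOn z s)
lemma family_card_le {d n M : ℕ} {ε : ℝ} {ι : Type*} [Fintype ι]
    (h : IFIScheme d n M ε) (DB : ι → Fin n → Fin d → Bool)
    (hconf : ∀ u v : ι, u ≠ v → ∃ a b : Fin d, a ≠ b ∧ ε ≤ freq (DB u) {a, b} ∧
      freq (DB v) {a, b} ≤ ε / 2) :
    Fintype.card ι ≤ 2 ^ M := by
  obtain ⟨Enc, Dec, hED⟩ := h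
  have hne : ∀ u : ι, {s | DecCorrect ε (DB u) Dec s}.Nonempty := by
    intro u
    rw [Set.nonempty_iff_ne_empty]
    intro hemp
    have h2 := hED (DB u)
    rw [hemp] at h2
    simp [PMF.toOuterMeasure_apply] at h2
  choose s hs using hne
  have hinj : Function.Injective s := by
    intro u v huv
    by_contra hne'
    obtain ⟨a, b, hab, h1, h2⟩ := hconf u v hne'
    have c1 := (hs u a b hab).1 h1
    have c2 := (hs v a b hab).2 h2
    rw [huv] at c1
    rw [c1] at c2
    exact Bool.noConfusion c2
  simpa using Fintype.card_le_of_injective s hinj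
lemma exists_family (L R t K : ℕ) (ε : ℝ) (hK : 0 < K) (hL : 2 ≤ L)
    (hε : 0 < ε) (hεK : ε * K ≤ 1) (hlight : (t : ℝ) / (K ^ 2 : ℕ) ≤ ε / 2) :
    ∃ DB : (Fin R → {s : Finset (Fin L) // s.card = t}) → (Fin (K ^ L) → Fin (L + R) → Bool),
      ∀ F F' : Fin R → {s : Finset (Fin L) // s.card = t}, F ≠ F' →
        ∃ a b : Fin (L + R), a ≠ b ∧ ε ≤ freq (DB F) {a, b} ∧ freq (DB F') {a, b} ≤ ε / 2 := by
  set z : Fin K := ⟨0, hK⟩ with hz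
  set e : (Fin L → Fin K) ≃ Fin (K ^ L) := finFunctionFinEquiv with he
  refine ⟨fun F x => Fin.addCases (fun i => decide (e.symm x i = z))
      (fun b => decide (∃ i ∈ (F b).1, e.symm x i = z)), ?_⟩
  intro F F' hFF'
  have hexb : ∃ b, F b ≠ F' b := by
    by_contra h; push_neg at h; exact hFF' (funext h)
  obtain ⟨b, hb⟩ := hexb
  have hcard : (F' b).1.card ≤ (F b).1.card := le_of_eq ((F' b).2.trans (F b).2.symm)
  have hnsub : ¬ (F b).1 ⊆ (F' b).1 := fun hsub =>
    hb (Subtype.ext (Finset.eq_of_subset_of_card_le hsub hcard))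
  obtain ⟨i, hiF, hiF'⟩ := Finset.not_subset.1 hnsub
  have hKLpos : (0:ℝ) < (K:ℝ) ^ L := by positivity
  have hcast : (((K ^ L : ℕ)) : ℝ) = (K:ℝ) ^ L := by push_cast; ring
  -- the key card computation
  have key : ∀ G : Fin R → {s : Finset (Fin L) // s.card = t},
      (Finset.univ.filter (fun x : Fin (K ^ L) =>
        ∀ c ∈ ({Fin.castAdd R i, Fin.natAdd L b} : Finset (Fin (L + R))),
          (Fin.addCases (fun i' => decide (e.symm x i' = z))
            (fun b' => decide (∃ i' ∈ (G b').1, e.symm x i' = z)) c) = true)).card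
      = (Finset.univ.filter (fun g : Fin L → Fin K =>
          g i = z ∧ ∃ i' ∈ (G b).1, g i' = z)).card := by
    intro G
    rw [← Fintype.card_subtype, ← Fintype.card_subtype]
    refine Fintype.card_congr (Equiv.subtypeEquiv e.symm ?_)
    intro x
    simp [Fin.addCases_left, Fin.addCases_right]
  -- single-coordinate count
  have count1 : (Finset.univ.filter (fun g : Fin L → Fin K => g i = z)).card
      = K ^ (L - 1) := by
    have h1 := card_zeroOn' z ({i} : Finset (Fin L))
      (p := fun g : Fin L → Fin K => g i = z) (by simp)
    rwa [Fintype.card_fin, Finset.card_singleton] at h1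
  have count2 : ∀ i' : Fin L, i' ≠ i →
      (Finset.univ.filter (fun g : Fin L → Fin K => g i = z ∧ g i' = z)).card
        = K ^ (L - 2) := by
    intro i' hii'
    have h1 := card_zeroOn' z ({i, i'} : Finset (Fin L))
      (p := fun g : Fin L → Fin K => g i = z ∧ g i' = z) ?_
    · rwa [Fintype.card_fin, Finset.card_insert_of_notMem (by simp [Ne.symm hii']),
        Finset.card_singleton] at h1
    · intro g
      constructor
      · rintro ⟨h1, h2⟩ a ha
        rcases Finset.mem_insert.1 ha with h | h
        · rwa [h]
        · rw [Finset.mem_singleton] at h; rwa [h]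
      · intro h
        exact ⟨h i (by simp), h i' (by simp)⟩
  refine ⟨Fin.castAdd R i, Fin.natAdd L b, ?_, ?_, ?_⟩
  · refine Fin.ne_of_val_ne ?_
    rw [Fin.coe_castAdd, Fin.coe_natAdd]
    exact Nat.ne_of_lt (lt_of_lt_of_le i.isLt (Nat.le_add_right L b))
  · -- heavy bound for F
    simp only [freq]
    rw [key F, hcast]
    rw [le_div_iff₀ hKLpos]
    have hsub2 : Finset.univ.filter (fun g : Fin L → Fin K => g i = z) ⊆
        Finset.univ.filter (fun g : Fin L → Fin K => g i = z ∧ ∃ i' ∈ (F b).1, g i' = z) := by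
      intro g hg
      rw [Finset.mem_filter] at hg ⊢
      exact ⟨hg.1, hg.2, ⟨i, hiF, hg.2⟩⟩
    have hge : (K:ℝ) ^ (L - 1) ≤
        ((Finset.univ.filter (fun g : Fin L → Fin K =>
          g i = z ∧ ∃ i' ∈ (F b).1, g i' = z)).card : ℝ) := by
      have h2 := Finset.card_le_card hsub2
      rw [count1] at h2
      exact_mod_cast h2
    have hKL : (K:ℝ) ^ L = (K:ℝ) ^ (L - 1) * K := by
      rw [← pow_succ, Nat.sub_add_cancel (le_trans one_le_two hL)]
    calc ε * (K:ℝ) ^ L = (ε * K) * (K:ℝ) ^ (L - 1) := by rw [hKL]; ring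
      _ ≤ 1 * (K:ℝ) ^ (L - 1) := by
          apply mul_le_mul_of_nonneg_right hεK (by positivity)
      _ = (K:ℝ) ^ (L - 1) := one_mul _
      _ ≤ _ := hge
  · -- light bound for F'
    simp only [freq]
    rw [key F', hcast]
    rw [div_le_iff₀ hKLpos]
    have hsub3 : Finset.univ.filter (fun g : Fin L → Fin K =>
          g i = z ∧ ∃ i' ∈ (F' b).1, g i' = z) ⊆
        (F' b).1.biUnion (fun i' => Finset.univ.filter
          (fun g : Fin L → Fin K => g i = z ∧ g i' = z)) := by
      intro g hg
      rw [Finset.mem_filter] at hg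
      obtain ⟨-, h1, i', hi', h2⟩ := hg
      exact Finset.mem_biUnion.2 ⟨i', hi', Finset.mem_filter.2 ⟨Finset.mem_univ g, h1, h2⟩⟩
    have hcard3 : ((Finset.univ.filter (fun g : Fin L → Fin K =>
          g i = z ∧ ∃ i' ∈ (F' b).1, g i' = z)).card : ℝ) ≤ (t : ℝ) * (K:ℝ) ^ (L - 2) := by
      have h1 := Finset.card_le_card hsub3
      have h2 := Finset.card_biUnion_le (s := (F' b).1)
        (t := fun i' => Finset.univ.filter (fun g : Fin L → Fin K => g i = z ∧ g i' = z))
      have h3 : ∑ i' ∈ (F' b).1, (Finset.univ.filter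
          (fun g : Fin L → Fin K => g i = z ∧ g i' = z)).card = t * K ^ (L - 2) := by
        rw [Finset.sum_congr rfl (fun i' hi' => count2 i' (fun hh => hiF' (hh ▸ hi')))]
        rw [Finset.sum_const, (F' b).2, smul_eq_mul]
      have := le_trans h1 (le_trans h2 (le_of_eq h3))
      calc ((Finset.univ.filter _).card : ℝ) ≤ ((t * K ^ (L - 2) : ℕ) : ℝ) := by exact_mod_cast this
        _ = (t : ℝ) * (K:ℝ) ^ (L - 2) := by push_cast; ring
    have hKL2 : (K:ℝ) ^ L = (K:ℝ) ^ (L - 2) * (K:ℝ) ^ 2 := by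
      rw [← pow_add, Nat.sub_add_cancel hL]
    have ht2 : (t : ℝ) ≤ ε / 2 * (K:ℝ) ^ 2 := by
      rw [div_le_iff₀ (by positivity : (0:ℝ) < ((K ^ 2 : ℕ) : ℝ))] at hlight
      calc (t:ℝ) ≤ ε / 2 * ((K ^ 2 : ℕ) : ℝ) := hlight
        _ = ε / 2 * (K:ℝ) ^ 2 := by push_cast; ring
    calc ((Finset.univ.filter _).card : ℝ) ≤ (t : ℝ) * (K:ℝ) ^ (L - 2) := hcard3
      _ ≤ (ε / 2 * (K:ℝ) ^ 2) * (K:ℝ) ^ (L - 2) := by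
          apply mul_le_mul_of_nonneg_right ht2 (by positivity)
      _ = ε / 2 * (K:ℝ) ^ L := by rw [hKL2]; ring
set_option maxHeartbeats 1000000 in
theorem itemset_frequency_indicator_lower_bound :
    ∃ c : ℝ, c > 0 ∧
      ∀ (d : ℕ) (ε : ℝ) (M : ℕ), 0 < d → 1 / (d : ℝ) ≤ ε → ε ≤ 1 / 8 →
        (∀ n : ℕ, IFIScheme d n M ε) →
        (M : ℝ) ≥ c * ((d : ℝ) / ε) * Real.log (ε * d) := by
  refine ⟨1/32, by norm_num, ?_⟩
  intro d ε M hd hεlow hεhigh hscheme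
  have hd0 : (0:ℝ) < d := by exact_mod_cast hd
  have hε0 : 0 < ε := lt_of_lt_of_le (by positivity) hεlow
  have hd8R : (8:ℝ) ≤ d := by
    have h1 : (1:ℝ)/d ≤ 1/8 := le_trans hεlow hεhigh
    rw [div_le_div_iff₀ hd0 (by norm_num)] at h1
    linarith
  have hd8 : 8 ≤ d := by exact_mod_cast hd8R
  set L := d / 2 with hLdef
  set R := d - d / 2 with hRdef
  have hd' : d = L + R := by omega
  have hL2 : 2 ≤ L := by omega
  have h2R : d ≤ 2 * R := by omega
  have hdL1 : d ≤ 2 * L + 1 := by omega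
  -- choice of K = 2^j with ε ≤ 1/K < 2ε
  set m := ⌊1/ε⌋₊ with hm
  have hm8 : 8 ≤ m := by
    rw [hm]
    refine Nat.le_floor ?_
    rw [le_div_iff₀ hε0]
    push_cast
    linarith
  set j := Nat.log 2 m with hj
  set K := 2 ^ j with hK
  have hK0 : 0 < K := Nat.pow_pos (by norm_num)
  have hKm : K ≤ m := Nat.pow_log_le_self 2 (by omega)
  have hKε : (K:ℝ) ≤ 1/ε := by
    calc (K:ℝ) ≤ (m:ℝ) := by exact_mod_cast hKm
      _ ≤ 1/ε := Nat.floor_le (by positivity)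
  have hεK : ε * K ≤ 1 := by
    calc ε * K ≤ ε * (1/ε) := mul_le_mul_of_nonneg_left hKε hε0.le
      _ = 1 := by field_simp
  have h2K : 1/ε < 2*(K:ℝ) := by
    have h1 : m < 2^(j+1) := Nat.lt_pow_succ_log_self (by norm_num) m
    have h2 : (1:ℝ)/ε < (m:ℝ) + 1 := Nat.lt_floor_add_one _
    have h3 : m + 1 ≤ 2 * K := by
      rw [hK, ← pow_succ']
      omega
    have h4 : (m:ℝ) + 1 ≤ 2*(K:ℝ) := by exact_mod_cast h3
    linarith
  -- choice of t
  set t := ⌊1/(8*ε)⌋₊ with ht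
  have ht1 : 1 ≤ t := by
    rw [ht]
    refine Nat.le_floor ?_
    rw [le_div_iff₀ (by positivity)]
    push_cast
    linarith
  have ht1R : (1:ℝ) ≤ (t:ℝ) := by exact_mod_cast ht1
  have htR : (t:ℝ) ≤ 1/(8*ε) := Nat.floor_le (by positivity)
  have ht16 : 1/(16*ε) ≤ (t:ℝ) := by
    have he : 1/(8*ε) = 2*(1/(16*ε)) := by ring
    rcases le_or_gt (1/(8*ε)) 2 with h | h
    · have h0 : (0:ℝ) < 1/(16*ε) := by positivity
      linarith
    · have h1 := Nat.sub_one_lt_floor (1/(8*ε))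
      rw [← ht] at h1
      linarith
  -- light condition
  have hKR0 : (0:ℝ) < K := by exact_mod_cast hK0
  have hlight : (t:ℝ) / ((K^2 : ℕ):ℝ) ≤ ε / 2 := by
    have h1 : 1/(2*ε) < (K:ℝ) := by
      have he : 1/ε = 2*(1/(2*ε)) := by ring
      linarith
    have h2 : ((K^2:ℕ):ℝ) = (K:ℝ)^2 := by push_cast; ring
    rw [h2, div_le_iff₀ (by positivity)]
    have h3 : (0:ℝ) < 1/(2*ε) := by positivity
    have h4 : (1/(2*ε))^2 ≤ (K:ℝ)^2 := by nlinarith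
    have h5 : ε/2 * (1/(2*ε))^2 = 1/(8*ε) := by
      field_simp
      ring
    calc (t:ℝ) ≤ 1/(8*ε) := htR
      _ = ε/2 * (1/(2*ε))^2 := h5.symm
      _ ≤ ε/2 * (K:ℝ)^2 := mul_le_mul_of_nonneg_left h4 (by positivity)
  clear_value L R m j K t
  -- the hard family of databases
  obtain ⟨DB, hconf⟩ := exists_family L R t K ε hK0 hL2 hε0 hεK hlight
  have hs2 := hscheme (K ^ L)
  rw [hd'] at hs2
  have hcount := family_card_le hs2 DB hconf
  rw [Fintype.card_fun, Fintype.card_finset_len, Fintype.card_fin, Fintype.card_fin] at hcount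
  -- basic real facts
  have hεd1 : (1:ℝ) ≤ ε * d := by
    rw [div_le_iff₀ hd0] at hεlow
    linarith
  have hlog0 : 0 ≤ Real.log (ε * d) := Real.log_nonneg hεd1
  have htd : (t:ℝ) ≤ (d:ℝ)/8 := by
    refine le_trans htR ?_
    rw [div_le_div_iff₀ (by positivity) (by norm_num : (0:ℝ) < 8)]
    nlinarith
  have htL : t ≤ L := by
    have hLc : ((d:ℝ) - 1)/2 ≤ (L:ℝ) := by
      have h3 : (d:ℝ) ≤ 2*(L:ℝ) + 1 := by exact_mod_cast hdL1
      linarith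
    have h1 : (t:ℝ) ≤ (L:ℝ) := by linarith
    exact_mod_cast h1
  have hchoose_pos : 0 < L.choose t := Nat.choose_pos htL
  -- Step A : (ε d)^t ≤ choose L t
  have hA : (ε * d)^t ≤ (L.choose t : ℝ) := by
    have hkey := pow_le_choose_mul L t
    have hcastLt : ((L + 1 - t : ℕ):ℝ) = (L:ℝ) + 1 - (t:ℝ) := by
      have h1 : t ≤ L + 1 := by omega
      rw [Nat.cast_sub h1]
      push_cast
      ring
    have h1 : ε * d * t ≤ (L:ℝ) + 1 - t := by
      have hεt : ε * t ≤ 1/8 := by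
        have he8 : ε * (1/(8*ε)) = 1/8 := by
          field_simp
        have h9 := mul_le_mul_of_nonneg_left htR hε0.le
        linarith
      have h2 : ε * d * t ≤ (d:ℝ)/8 := by nlinarith
      have h3 : (d:ℝ) ≤ 2*(L:ℝ) + 1 := by exact_mod_cast hdL1
      linarith
    have h2 : (ε*(d:ℝ)*t)^t ≤ ((L:ℝ)+1-(t:ℝ))^t := pow_le_pow_left₀ (by positivity) h1 t
    have h3 : ((L:ℝ)+1-(t:ℝ))^t ≤ (t:ℝ)^t * (L.choose t : ℝ) := by
      rw [← hcastLt]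
      exact_mod_cast hkey
    have ht0R : (0:ℝ) < (t:ℝ)^t := by positivity
    have h4 : (ε*d)^t * (t:ℝ)^t ≤ (L.choose t : ℝ) * (t:ℝ)^t := by
      calc (ε*(d:ℝ))^t * (t:ℝ)^t = (ε*(d:ℝ)*t)^t := (mul_pow (ε*(d:ℝ)) ((t:ℕ):ℝ) t).symm
        _ ≤ ((L:ℝ)+1-(t:ℝ))^t := h2
        _ ≤ (t:ℝ)^t * (L.choose t : ℝ) := h3
        _ = (L.choose t : ℝ) * (t:ℝ)^t := by ring
    exact le_of_mul_le_mul_right h4 ht0R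
  -- Step B
  have hB : (t:ℝ) * Real.log (ε*d) ≤ Real.log (L.choose t) := by
    have h1 := Real.log_le_log (by positivity : (0:ℝ) < (ε*(d:ℝ))^t) hA
    rwa [Real.log_pow] at h1
  -- Step C
  have hC : (R:ℝ) * Real.log (L.choose t) ≤ (M:ℝ) * Real.log 2 := by
    have h1 : ((L.choose t : ℕ):ℝ)^R ≤ (2:ℝ)^M := by exact_mod_cast hcount
    have hpos : (0:ℝ) < ((L.choose t : ℕ):ℝ)^R := by
      have : (0:ℝ) < ((L.choose t : ℕ):ℝ) := by exact_mod_cast hchoose_pos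
      positivity
    have h2 := Real.log_le_log hpos h1
    rwa [Real.log_pow, Real.log_pow] at h2
  -- conclusion
  have hlog2 : Real.log 2 ≤ 1 := by
    have := Real.log_le_sub_one_of_pos (by norm_num : (0:ℝ) < 2)
    linarith
  have hM0 : (0:ℝ) ≤ M := Nat.cast_nonneg M
  have hRd : (d:ℝ)/2 ≤ (R:ℝ) := by
    have h1 : (d:ℝ) ≤ 2*(R:ℝ) := by exact_mod_cast h2R
    linarith
  have hRt : (1/32) * ((d:ℝ)/ε) ≤ (R:ℝ) * t := by
    have h1 : (d:ℝ)/2 * (1/(16*ε)) ≤ (R:ℝ) * (t:ℝ) :=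
      mul_le_mul hRd ht16 (by positivity) (by positivity)
    calc (1/32) * ((d:ℝ)/ε) = (d:ℝ)/2 * (1/(16*ε)) := by ring
      _ ≤ (R:ℝ) * t := h1
  calc (1/32) * ((d:ℝ)/ε) * Real.log (ε*d)
      ≤ ((R:ℝ)*t) * Real.log (ε*d) := mul_le_mul_of_nonneg_right hRt hlog0
    _ = (R:ℝ) * ((t:ℝ) * Real.log (ε*d)) := by ring
    _ ≤ (R:ℝ) * Real.log (L.choose t) := mul_le_mul_of_nonneg_left hB (Nat.cast_nonneg R)
    _ ≤ (M:ℝ) * Real.log 2 := hC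
    _ ≤ (M:ℝ) * 1 := mul_le_mul_of_nonneg_left hlog2 hM0
    _ = (M:ℝ) := mul_one _
end

section
/- There is a constant c > 0 with the following property. Let d ≥ 2 be an integer and let M be a natural number. Suppose that for every number of rows n there exists a (1/8, M)-Itemset-Frequency-Indicator sketching scheme for pairs on d items and n rows (with randomized encoder succeeding with probability at least 3/4). Then M ≥ c · d · log d. -/
/-! ### Auxiliary construction: an algebraic design over `ZMod p`. -/

open Finset

private lemma IFI.card_filter_equiv {α β : Type*} [Fintype α] [Fintype β] (e : α ≃ β)
    (P : β → Prop) [DecidablePred P] :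
    (univ.filter fun a => P (e a)).card = (univ.filter P).card := by
  apply Finset.card_bij' (fun a _ => e a) (fun b _ => e.symm b) <;> simp

section design
variable (p : ℕ) [Fact p.Prime] (s d m : ℕ)

private def IFI.Aset : Finset (ZMod p) := (Finset.range s).image (Nat.cast)

private lemma IFI.Aset_card (hs : s ≤ p) : (IFI.Aset p s).card = s := by
  rw [IFI.Aset, Finset.card_image_of_injOn, Finset.card_range]
  intro a ha b hb hab
  simp only [Finset.coe_range, Set.mem_Iio] at ha hb
  have hp := (Fact.out : p.Prime).one_lt
  have ha' := ZMod.val_cast_of_lt (show a < p by omega)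
  have hb' := ZMod.val_cast_of_lt (show b < p by omega)
  rw [← ha', ← hb', hab]

private def IFI.memS (w : ZMod p) (x : ZMod p × ZMod p) : Prop := x.1 + w * x.2 ∈ IFI.Aset p s

instance (w : ZMod p) (x : ZMod p × ZMod p) : Decidable (IFI.memS p s w x) := by
  unfold IFI.memS; infer_instance

private lemma IFI.card_S (w : ZMod p) :
    (univ.filter fun x : ZMod p × ZMod p => IFI.memS p s w x).card = (IFI.Aset p s).card * p := by
  have : ((IFI.Aset p s) ×ˢ (univ : Finset (ZMod p))).card = (IFI.Aset p s).card * p := by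
    rw [Finset.card_product, Finset.card_univ, ZMod.card]
  rw [← this]
  apply Finset.card_bij' (fun x _ => (x.1 + w * x.2, x.2))
    (fun y _ => (y.1 - w * y.2, y.2))
  · intro x hx
    simp only [Finset.mem_filter, Finset.mem_univ, true_and] at hx
    simp [Finset.mem_product, hx, IFI.memS] at hx ⊢
    exact hx
  · intro y hy
    simp only [Finset.mem_product, Finset.mem_univ, and_true] at hy
    simp only [Finset.mem_filter, Finset.mem_univ, true_and]
    simp only [IFI.memS]
    convert hy using 2
    ring
  · intro x _; simp
  · intro y _; simp

private lemma IFI.card_S_inter {w w' : ZMod p} (hww : w ≠ w') :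
    (univ.filter fun x : ZMod p × ZMod p => IFI.memS p s w x ∧ IFI.memS p s w' x).card
      = (IFI.Aset p s).card * (IFI.Aset p s).card := by
  have hne : w' - w ≠ 0 := sub_ne_zero.mpr (Ne.symm hww)
  have : ((IFI.Aset p s) ×ˢ (IFI.Aset p s)).card = (IFI.Aset p s).card * (IFI.Aset p s).card :=
    Finset.card_product _ _
  rw [← this]
  apply Finset.card_bij' (fun x _ => (x.1 + w * x.2, x.1 + w' * x.2))
    (fun y _ => (y.1 - w * ((w' - w)⁻¹ * (y.2 - y.1)), (w' - w)⁻¹ * (y.2 - y.1)))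
  · intro x hx
    simp only [Finset.mem_filter, Finset.mem_univ, true_and] at hx
    simp only [IFI.memS] at hx
    simp [Finset.mem_product, hx]
  · intro y hy
    simp only [Finset.mem_product] at hy
    have h1 : y.1 - w * ((w' - w)⁻¹ * (y.2 - y.1)) + w * ((w' - w)⁻¹ * (y.2 - y.1)) = y.1 := by ring
    have h2 : y.1 - w * ((w' - w)⁻¹ * (y.2 - y.1)) + w' * ((w' - w)⁻¹ * (y.2 - y.1)) = y.2 := by
      field_simp
      ring
    simp only [Finset.mem_filter, Finset.mem_univ, true_and]
    simp only [IFI.memS, h1, h2]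
    exact hy
  · intro x hx
    have h3 : (w' - w)⁻¹ * ((x.1 + w' * x.2) - (x.1 + w * x.2)) = x.2 := by
      field_simp; ring
    refine Prod.ext ?_ ?_
    · show x.1 + w * x.2 - w * ((w' - w)⁻¹ * (x.1 + w' * x.2 - (x.1 + w * x.2))) = x.1
      rw [h3]; ring
    · exact h3
  · intro y hy
    have h1 : y.1 - w * ((w' - w)⁻¹ * (y.2 - y.1)) + w * ((w' - w)⁻¹ * (y.2 - y.1)) = y.1 := by ring
    have h2 : y.1 - w * ((w' - w)⁻¹ * (y.2 - y.1)) + w' * ((w' - w)⁻¹ * (y.2 - y.1)) = y.2 := by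
      field_simp; ring
    simp [h1, h2]

private noncomputable def IFI.rho : Fin (p*p) ≃ ZMod p × ZMod p :=
  (Fintype.equivFinOfCardEq (by simp [ZMod.card])).symm

variable (hd : 2 * m ≤ d)

private def IFI.ai (i : Fin m) : Fin d := ⟨i.1, by omega⟩
private def IFI.bi (j : Fin m) : Fin d := ⟨m + j.1, by omega⟩

private noncomputable def IFI.DB (σ : Equiv.Perm (Fin m)) : Fin (p*p) → Fin d → Bool :=
  fun x t => decide (∃ i : Fin m,
    IFI.memS p s ((i : ℕ) : ZMod p) (IFI.rho p x) ∧ (t = IFI.ai d m hd i ∨ t = IFI.bi d m hd (σ i)))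

private lemma IFI.DB_ai (σ : Equiv.Perm (Fin m)) (x : Fin (p*p)) (i : Fin m) :
    IFI.DB p s d m hd σ x (IFI.ai d m hd i) = true ↔
      IFI.memS p s ((i : ℕ) : ZMod p) (IFI.rho p x) := by
  simp only [IFI.DB, decide_eq_true_eq]
  constructor
  · rintro ⟨i', hmem, h | h⟩
    · obtain rfl : i = i' := by
        simpa [IFI.ai, Fin.ext_iff] using h
      exact hmem
    · exfalso
      have := congrArg Fin.val h
      simp only [IFI.ai, IFI.bi] at this
      omega
  · intro h; exact ⟨i, h, Or.inl rfl⟩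

private lemma IFI.DB_bi (σ : Equiv.Perm (Fin m)) (x : Fin (p*p)) (j : Fin m) :
    IFI.DB p s d m hd σ x (IFI.bi d m hd j) = true ↔
      IFI.memS p s ((σ.symm j : ℕ) : ZMod p) (IFI.rho p x) := by
  simp only [IFI.DB, decide_eq_true_eq]
  constructor
  · rintro ⟨i', hmem, h | h⟩
    · exfalso
      have := congrArg Fin.val h
      simp only [IFI.ai, IFI.bi] at this
      omega
    · obtain rfl : j = σ i' := by
        simpa [IFI.bi, Fin.ext_iff] using h
      rwa [Equiv.symm_apply_apply]
  · intro h
    refine ⟨σ.symm j, h, Or.inr ?_⟩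
    rw [Equiv.apply_symm_apply]

private lemma IFI.freq_pair (σ : Equiv.Perm (Fin m)) (i j : Fin m) :
    freq (IFI.DB p s d m hd σ) {IFI.ai d m hd i, IFI.bi d m hd j}
      = ((univ.filter fun x : ZMod p × ZMod p =>
          IFI.memS p s ((i : ℕ) : ZMod p) x ∧ IFI.memS p s ((σ.symm j : ℕ) : ZMod p) x).card : ℝ)
        / ((p * p : ℕ) : ℝ) := by
  unfold freq
  congr 2
  rw [← IFI.card_filter_equiv (IFI.rho p)
    (fun y => IFI.memS p s ((i : ℕ) : ZMod p) y ∧ IFI.memS p s ((σ.symm j : ℕ) : ZMod p) y)]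
  congr 1
  apply Finset.filter_congr
  intro x _
  constructor
  · intro hx
    have h1 := hx _ (Finset.mem_insert_self _ _)
    have h2 := hx _ (Finset.mem_insert_of_mem (Finset.mem_singleton_self _))
    exact ⟨(IFI.DB_ai p s d m hd σ x i).mp h1, (IFI.DB_bi p s d m hd σ x j).mp h2⟩
  · intro hy t ht
    rcases Finset.mem_insert.mp ht with rfl | ht
    · exact (IFI.DB_ai p s d m hd σ x i).mpr hy.1
    · rw [Finset.mem_singleton.mp ht]
      exact (IFI.DB_bi p s d m hd σ x j).mpr hy.2

private lemma IFI.freq_heavy (hsp : s ≤ p) (hs8 : p ≤ 8 * s) (σ : Equiv.Perm (Fin m)) (i : Fin m) :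
    freq (IFI.DB p s d m hd σ) {IFI.ai d m hd i, IFI.bi d m hd (σ i)} ≥ 1 / 8 := by
  rw [IFI.freq_pair]
  have hcount : (univ.filter fun x : ZMod p × ZMod p =>
      IFI.memS p s ((i : ℕ) : ZMod p) x ∧
        IFI.memS p s ((σ.symm (σ i) : ℕ) : ZMod p) x).card = s * p := by
    rw [Equiv.symm_apply_apply]
    simp only [and_self]
    rw [IFI.card_S, IFI.Aset_card p s hsp]
  rw [hcount]
  have hp : 0 < p := (Fact.out : p.Prime).pos
  have hp' : (0:ℝ) < p := by exact_mod_cast hp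
  have hs8' : (p:ℝ) ≤ 8 * s := by exact_mod_cast hs8
  rw [ge_iff_le, div_le_div_iff₀ (by norm_num) (by positivity)]
  push_cast
  nlinarith [mul_le_mul_of_nonneg_right hs8' hp'.le]

private lemma IFI.freq_light (hsp : s ≤ p) (hs4 : 4 * s ≤ p) (hmp : m ≤ p)
    (σ : Equiv.Perm (Fin m)) (i j : Fin m) (hij : σ.symm j ≠ i) :
    freq (IFI.DB p s d m hd σ) {IFI.ai d m hd i, IFI.bi d m hd j} ≤ 1 / 16 := by
  rw [IFI.freq_pair]
  have hne : ((i : ℕ) : ZMod p) ≠ ((σ.symm j : ℕ) : ZMod p) := by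
    intro h
    apply hij
    have hi := ZMod.val_cast_of_lt (show (i : ℕ) < p by omega)
    have hj := ZMod.val_cast_of_lt (show ((σ.symm j : Fin m) : ℕ) < p by omega)
    apply Fin.ext
    rw [← hi, ← hj, h]
  rw [IFI.card_S_inter p s hne, IFI.Aset_card p s hsp]
  have hp : 0 < p := (Fact.out : p.Prime).pos
  have hs4' : 4 * (s:ℝ) ≤ p := by exact_mod_cast hs4
  have hs0 : (0:ℝ) ≤ (s:ℝ) := by positivity
  rw [div_le_div_iff₀ (by positivity) (by norm_num)]
  push_cast
  nlinarith [mul_le_mul hs4' hs4' (by positivity) (by positivity : (0:ℝ) ≤ (p:ℝ))]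

/-- The heart of the counting argument: `m ! ≤ 2 ^ M`. -/
private lemma IFI.factorial_le {M : ℕ} (hdm : 2 * m ≤ d) (hsp : s ≤ p) (hs8 : p ≤ 8 * s)
    (hs4 : 4 * s ≤ p) (hmp : m ≤ p) (hscheme : IFIScheme d (p * p) M (1 / 8)) :
    Nat.factorial m ≤ 2 ^ M := by
  obtain ⟨Enc, Dec, hE⟩ := hscheme
  have hne : ∀ σ : Equiv.Perm (Fin m),
      {t | DecCorrect (1/8) (IFI.DB p s d m hdm σ) Dec t}.Nonempty := by
    intro σ
    rw [Set.nonempty_iff_ne_empty]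
    intro h
    have h34 := hE (IFI.DB p s d m hdm σ)
    rw [h] at h34
    simp only [MeasureTheory.measure_empty] at h34
    norm_num at h34
  have hf : ∀ σ : Equiv.Perm (Fin m),
      DecCorrect (1/8) (IFI.DB p s d m hdm σ) Dec (hne σ).choose := fun σ => (hne σ).choose_spec
  have hinj : Function.Injective (fun σ : Equiv.Perm (Fin m) => (hne σ).choose) := by
    intro σ τ h
    by_contra hst
    have : ∃ i, σ i ≠ τ i := by
      by_contra hall
      push_neg at hall
      exact hst (Equiv.ext hall)
    obtain ⟨i, hi⟩ := this
    have hab : IFI.ai d m hdm i ≠ IFI.bi d m hdm (σ i) := by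
      intro hc
      have := congrArg Fin.val hc
      simp only [IFI.ai, IFI.bi] at this
      omega
    have h1 := (hf σ (IFI.ai d m hdm i) (IFI.bi d m hdm (σ i)) hab).1
      (IFI.freq_heavy p s d m hdm hsp hs8 σ i)
    have hlight : freq (IFI.DB p s d m hdm τ) {IFI.ai d m hdm i, IFI.bi d m hdm (σ i)}
        ≤ (1/8) / 2 := by
      have := IFI.freq_light p s d m hdm hsp hs4 hmp τ i (σ i)
        (by
          intro hc
          apply hi
          have hc2 := congrArg τ hc
          rwa [Equiv.apply_symm_apply] at hc2)
      linarith
    have h2 := (hf τ (IFI.ai d m hdm i) (IFI.bi d m hdm (σ i)) hab).2 hlight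
    have h' : (hne σ).choose = (hne τ).choose := h
    rw [h'] at h1
    rw [h1] at h2
    exact absurd h2 (by simp)
  calc Nat.factorial m = Fintype.card (Equiv.Perm (Fin m)) := by
        rw [Fintype.card_perm, Fintype.card_fin]
    _ ≤ Fintype.card (Fin (2 ^ M)) := Fintype.card_le_of_injective _ hinj
    _ = 2 ^ M := Fintype.card_fin _

end design

/-- With at least two items, every scheme needs at least one bit. -/
private lemma IFI.one_le_M {d M : ℕ} (hd : 2 ≤ d) (hscheme : IFIScheme d 1 M (1 / 8)) :
    1 ≤ M := by
  obtain ⟨Enc, Dec, hE⟩ := hscheme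
  set a : Fin d := ⟨0, by omega⟩
  set b : Fin d := ⟨1, by omega⟩
  have hab : a ≠ b := by simp [a, b, Fin.ext_iff]
  have hne : ∀ D : Fin 1 → Fin d → Bool,
      {t | DecCorrect (1/8) D Dec t}.Nonempty := by
    intro D
    rw [Set.nonempty_iff_ne_empty]
    intro h
    have h34 := hE D
    rw [h] at h34
    simp only [MeasureTheory.measure_empty] at h34
    norm_num at h34
  set D1 : Fin 1 → Fin d → Bool := fun _ _ => true
  set D0 : Fin 1 → Fin d → Bool := fun _ _ => false
  have hfreq1 : freq D1 {a, b} = 1 := by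
    unfold freq
    have : (Finset.univ.filter (fun i : Fin 1 => ∀ j ∈ ({a, b} : Finset (Fin d)), D1 i j = true))
        = Finset.univ := by
      apply Finset.filter_true_of_mem
      intro x _ j _
      rfl
    rw [this]
    simp
  have hfreq0 : freq D0 {a, b} = 0 := by
    unfold freq
    have : (Finset.univ.filter (fun i : Fin 1 => ∀ j ∈ ({a, b} : Finset (Fin d)), D0 i j = true))
        = ∅ := by
      apply Finset.filter_false_of_mem
      intro x _ hx
      have := hx a (Finset.mem_insert_self _ _)
      simp [D0] at this
    rw [this]
    simp
  have h1 := ((hne D1).choose_spec a b hab).1 (by rw [hfreq1]; norm_num)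
  have h0 := ((hne D0).choose_spec a b hab).2 (by rw [hfreq0]; norm_num)
  by_contra hM
  have hM0 : M = 0 := by omega
  have hcard : (2 : ℕ) ^ M = 1 := by rw [hM0, pow_zero]
  have : (hne D1).choose = (hne D0).choose := by
    have hv1 := ((hne D1).choose).2
    have hv0 := ((hne D0).choose).2
    apply Fin.ext
    omega
  rw [this, h0] at h1
  exact absurd h1 (by simp)

theorem itemset_frequency_indicator_lower_bound_const_eps :
    ∃ c : ℝ, c > 0 ∧
      ∀ (d M : ℕ), 2 ≤ d →
        (∀ n : ℕ, IFIScheme d n M (1 / 8)) →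
        (M : ℝ) ≥ c * (d : ℝ) * Real.log d := by
  refine ⟨1 / 300, by norm_num, ?_⟩
  intro d M hd2 hscheme
  have hM1 : 1 ≤ M := IFI.one_le_M hd2 (hscheme 1)
  have hd0 : (0:ℝ) < d := by positivity
  have hlogd0 : 0 ≤ Real.log d := Real.log_nonneg (by exact_mod_cast hd2.trans' (by norm_num))
  rcases le_or_gt d 63 with hsmall | hbig
  · -- small case : use `M ≥ 1`
    have hlog : Real.log d ≤ Real.log 64 := Real.log_le_log hd0 (by exact_mod_cast hsmall.trans (by norm_num))
    have h64 : Real.log 64 = 6 * Real.log 2 := by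
      rw [show (64:ℝ) = 2 ^ 6 by norm_num, Real.log_pow]
      norm_num
    have hl2 : Real.log 2 < 0.6931471808 := Real.log_two_lt_d9
    have hM1' : (1:ℝ) ≤ M := by exact_mod_cast hM1
    have hdc : (d:ℝ) ≤ 63 := by exact_mod_cast hsmall
    have : (1/300 : ℝ) * d * Real.log d ≤ (1/300) * 63 * (6 * Real.log 2) := by
      rw [mul_assoc, mul_assoc]
      apply mul_le_mul_of_nonneg_left _ (by norm_num)
      calc (d:ℝ) * Real.log d ≤ 63 * Real.log 64 :=
            mul_le_mul hdc hlog hlogd0 (by norm_num)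
        _ = 63 * (6 * Real.log 2) := by rw [h64]
    have hl20 : 0 ≤ Real.log 2 := Real.log_nonneg (by norm_num)
    nlinarith
  · -- large case: 64 ≤ d, use the design construction
    have hd64 : 64 ≤ d := hbig
    obtain ⟨p, hp, hdp, hp2d⟩ := Nat.exists_prime_lt_and_le_two_mul d (by omega)
    haveI : Fact p.Prime := ⟨hp⟩
    set m := d / 2 with hm
    set s := p / 8 + 1 with hs
    have hd : 2 * m ≤ d := by omega
    have hp65 : 65 ≤ p := by omega
    have hsp : s ≤ p := by omega
    have hs8 : p ≤ 8 * s := by omega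
    have hs4 : 4 * s ≤ p := by omega
    have hmp : m ≤ p := by omega
    have hfact : Nat.factorial m ≤ 2 ^ M :=
      IFI.factorial_le p s d m hd hsp hs8 hs4 hmp (hscheme (p * p))
    set q := m / 2 with hq
    have hqq : q ^ q ≤ Nat.factorial m := by
      calc q ^ q ≤ (q + 1) ^ q := Nat.pow_le_pow_left (by omega) q
        _ ≤ Nat.factorial q * (q + 1) ^ q :=
            Nat.le_mul_of_pos_left _ (Nat.factorial_pos q)
        _ ≤ Nat.factorial (q + q) := Nat.factorial_mul_pow_le_factorial
        _ ≤ Nat.factorial m := Nat.factorial_le (by omega)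
    have hq2M : q ^ q ≤ 2 ^ M := hqq.trans hfact
    have hq16 : 16 ≤ q := by omega
    have hq0 : (0:ℝ) < q := by
      have : 0 < q := by omega
      exact_mod_cast this
    have hcast : ((q:ℝ)) ^ q ≤ (2:ℝ) ^ M := by exact_mod_cast hq2M
    have hlog : (q:ℝ) * Real.log q ≤ (M:ℝ) * Real.log 2 := by
      have := Real.log_le_log (by positivity) hcast
      rwa [Real.log_pow, Real.log_pow] at this
    have hlogq0 : 0 ≤ Real.log q := Real.log_nonneg (by exact_mod_cast hq16.trans' (by norm_num))
    have hl2 : Real.log 2 < 0.6931471808 := Real.log_two_lt_d9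
    have hMq : (q:ℝ) * Real.log q ≤ M := by
      have hM0 : (0:ℝ) ≤ M := by positivity
      nlinarith
    -- relate q, log q to d, log d
    have hq8 : (d:ℝ) ≤ 8 * q := by
      have : d ≤ 8 * q := by omega
      exact_mod_cast this
    have hlogdq : Real.log d ≤ 2 * Real.log q := by
      have h1 : Real.log d ≤ Real.log (8 * q) := by
        apply Real.log_le_log hd0
        exact hq8.trans_eq rfl
      rw [Real.log_mul (by norm_num) (by positivity)] at h1
      have h2 : Real.log 8 ≤ Real.log q := by
        apply Real.log_le_log (by norm_num)
        exact_mod_cast (by omega : 8 ≤ q)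
      linarith
    have hprod : (d:ℝ) * Real.log d ≤ 16 * ((q:ℝ) * Real.log q) := by
      have := mul_le_mul hq8 hlogdq hlogd0 (by positivity : (0:ℝ) ≤ 8 * q)
      nlinarith
    have hdd0 : 0 ≤ (d:ℝ) * Real.log d := by positivity
    rw [ge_iff_le, mul_assoc]
    nlinarith
end

section
/- There is a constant C > 0 with the following property. For every integer m ≥ 2 and every permutation Π of Fin m, if n ≥ C · log m and S₁, …, Sₙ are independent uniformly random subsets of Fin m, then with probability at least 3/4, for every pair i, j : Fin m with j ≠ Π(i), the number of indices t with i ∈ Sₜ and Π⁻¹(j) ∉ Sₜ is at least n/8. -/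
open Finset

private lemma count_lb {m : ℕ} (i b : Fin m) (hib : i ≠ b) :
    (2:ℝ)^(m-2) ≤ ((univ.filter (fun a : Finset (Fin m) => i ∈ a ∧ b ∉ a)).card : ℝ) := by
  classical
  have hbmem : b ∈ Finset.univ.erase i := by
    simp [Finset.mem_erase, Ne.symm hib]
  have hcard : (((univ.erase i).erase b)).card = m - 2 := by
    rw [Finset.card_erase_of_mem hbmem, Finset.card_erase_of_mem (Finset.mem_univ i)]
    simp only [Finset.card_univ, Fintype.card_fin]
    omega
  have key : ((univ.erase i).erase b).powerset.card ≤
      (univ.filter (fun a : Finset (Fin m) => i ∈ a ∧ b ∉ a)).card := by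
    apply Finset.card_le_card_of_injOn (fun B => insert i B)
    · intro B hB
      rw [Finset.mem_coe, Finset.mem_powerset] at hB
      simp only [Finset.mem_coe, Finset.mem_filter, Finset.mem_univ, true_and]
      refine ⟨Finset.mem_insert_self i B, fun hb => ?_⟩
      rcases Finset.mem_insert.mp hb with h | h
      · exact hib h.symm
      · have := hB h
        simp [Finset.mem_erase] at this
    · intro B hB B' hB' h
      have hiB : i ∉ B := by
        intro h'
        have := Finset.mem_powerset.mp (Finset.mem_coe.mp hB) h'
        simp [Finset.mem_erase] at this
      have hiB' : i ∉ B' := by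
        intro h'
        have := Finset.mem_powerset.mp (Finset.mem_coe.mp hB') h'
        simp [Finset.mem_erase] at this
      simp only at h
      calc B = (insert i B).erase i := (Finset.erase_insert hiB).symm
        _ = (insert i B').erase i := by rw [h]
        _ = B' := Finset.erase_insert hiB'
  rw [Finset.card_powerset, hcard] at key
  calc (2:ℝ)^(m-2) = ((2^(m-2) : ℕ) : ℝ) := by push_cast; ring
    _ ≤ _ := by exact_mod_cast key

private lemma badcard_le {m n : ℕ} (hm : 2 ≤ m) (i b : Fin m) (hib : i ≠ b) :
    ((univ.filter (fun S : Fin n → Finset (Fin m) =>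
        8 * (univ.filter (fun t => i ∈ S t ∧ b ∉ S t)).card < n)).card : ℝ)
      ≤ ((2:ℝ)^m)^n * ((93783563041:ℝ)/97280000000)^n := by
  classical
  set ν : ℝ := ((19:ℝ)/20)^8 with hν
  set μ : ℝ := (20:ℝ)/19 with hμ
  have hν0 : 0 < ν := by positivity
  have hν1 : ν ≤ 1 := by rw [hν]; norm_num
  have hμ1 : 1 ≤ μ := by rw [hμ]; norm_num
  have hμν : μ^8 * ν = 1 := by rw [hν, hμ, ← mul_pow]; norm_num
  set f : (Fin n → Finset (Fin m)) → ℕ :=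
    fun S => (univ.filter (fun t => i ∈ S t ∧ b ∉ S t)).card with hf
  set g : Finset (Fin m) → ℝ := fun a => if i ∈ a ∧ b ∉ a then ν else 1 with hg
  have step1 : ((univ.filter (fun S : Fin n → Finset (Fin m) => 8 * f S < n)).card : ℝ)
      ≤ μ^n * ∑ S : Fin n → Finset (Fin m), ν ^ f S := by
    rw [Finset.card_eq_sum_ones]
    push_cast
    rw [Finset.mul_sum]
    refine le_trans (Finset.sum_le_sum ?_)
      (Finset.sum_le_sum_of_subset_of_nonneg (Finset.filter_subset _ _) ?_)
    · intro S hS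
      have h8 : 8 * f S ≤ n := le_of_lt (Finset.mem_filter.mp hS).2
      have hkey : μ ^ n * ν ^ f S = μ ^ (n - 8 * f S) := by
        have hn : n = (n - 8 * f S) + 8 * f S := by omega
        calc μ ^ n * ν ^ f S
            = μ ^ ((n - 8*f S) + 8*f S) * ν ^ f S := by rw [← hn]
          _ = μ ^ (n - 8*f S) * ((μ^8)^(f S) * ν ^ f S) := by
              rw [pow_add, pow_mul]; ring
          _ = μ ^ (n - 8*f S) * (μ^8 * ν)^(f S) := by rw [mul_pow]
          _ = μ ^ (n - 8*f S) := by rw [hμν]; simp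
      rw [hkey]
      exact one_le_pow₀ hμ1
    · intro S _ _
      positivity
  have step34 : ∑ S : Fin n → Finset (Fin m), ν ^ f S = (∑ a : Finset (Fin m), g a) ^ n := by
    have h1 : ∀ S : Fin n → Finset (Fin m), ν ^ f S = ∏ t : Fin n, g (S t) := by
      intro S
      rw [hf]
      simp only [Finset.card_filter]
      rw [← Finset.prod_pow_eq_pow_sum]
      apply Finset.prod_congr rfl
      intro t _
      by_cases h : i ∈ S t ∧ b ∉ S t <;> simp [hg, h]
    simp_rw [h1]
    rw [← Fintype.prod_sum (fun _ : Fin n => g)]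
    rw [Finset.prod_const, Finset.card_univ, Fintype.card_fin]
  have step5 : ∑ a : Finset (Fin m), g a ≤ (2:ℝ)^(m-2) * (3 + ν) := by
    have hc1 := count_lb i b hib
    set c1 := (univ.filter (fun a : Finset (Fin m) => i ∈ a ∧ b ∉ a)).card with hc1def
    have hle : c1 ≤ 2^m := by
      calc c1 ≤ Fintype.card (Finset (Fin m)) := by
            rw [← Finset.card_univ]; exact Finset.card_filter_le _ _
        _ = 2^m := by rw [Fintype.card_finset, Fintype.card_fin]
    have hsum : ∑ a : Finset (Fin m), g a = ν * c1 + ((2:ℝ)^m - c1) := by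
      rw [hg]
      rw [Finset.sum_ite]
      simp only [Finset.sum_const, nsmul_eq_mul, mul_one]
      have hneg : (univ.filter (fun a : Finset (Fin m) => ¬(i ∈ a ∧ b ∉ a))).card
          = 2^m - c1 := by
        have := Finset.card_filter_add_card_filter_not
          (s := (univ : Finset (Finset (Fin m)))) (p := fun a => i ∈ a ∧ b ∉ a)
        rw [Finset.card_univ, Fintype.card_finset, Fintype.card_fin] at this
        omega
      rw [hneg]
      have : ((2^m - c1 : ℕ) : ℝ) = (2:ℝ)^m - c1 := by
        push_cast [Nat.cast_sub hle]
        ring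
      rw [this]
      ring
    rw [hsum]
    have h2m : (2:ℝ)^m = (2:ℝ)^(m-2) * 4 := by
      have hm2 : m = (m-2) + 2 := by omega
      rw [hm2]; rw [pow_add]; norm_num
    nlinarith [mul_nonneg (sub_nonneg.mpr hν1) (sub_nonneg.mpr hc1)]
  have hgnn : (0:ℝ) ≤ ∑ a : Finset (Fin m), g a := by
    apply Finset.sum_nonneg
    intro a _
    rw [hg]
    dsimp only
    split <;> [linarith; norm_num]
  calc ((univ.filter (fun S : Fin n → Finset (Fin m) =>
        8 * (univ.filter (fun t => i ∈ S t ∧ b ∉ S t)).card < n)).card : ℝ)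
      ≤ μ^n * (∑ a : Finset (Fin m), g a)^n := by rw [← step34]; exact step1
    _ ≤ μ^n * ((2:ℝ)^(m-2) * (3 + ν))^n := by
        gcongr
    _ = (μ * ((2:ℝ)^(m-2) * (3 + ν)))^n := by
        rw [mul_pow μ ((2:ℝ)^(m-2) * (3 + ν)) n, mul_pow ((2:ℝ)^(m-2)) (3 + ν) n]
    _ = ((2:ℝ)^m * (93783563041/97280000000))^n := by
        congr 1
        have h2m : (2:ℝ)^m = (2:ℝ)^(m-2) * 4 := by
          have hm2 : m = (m-2) + 2 := by omega
          rw [hm2]; rw [pow_add]; norm_num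
        have hkey : μ * (3 + ν) = (4:ℝ) * (93783563041/97280000000) := by
          rw [hμ, hν]; norm_num
        calc μ * ((2:ℝ)^(m-2) * (3 + ν)) = (2:ℝ)^(m-2) * (μ * (3+ν)) := by ring
          _ = (2:ℝ)^(m-2) * 4 * (93783563041/97280000000) := by rw [hkey]; ring
          _ = (2:ℝ)^m * (93783563041/97280000000) := by rw [← h2m]
    _ = ((2:ℝ)^m)^n * ((93783563041:ℝ)/97280000000)^n := by rw [mul_pow]


private lemma numeric_bd {m n : ℕ} (hm : 2 ≤ m) (hn : (n:ℝ) ≥ 120 * Real.log m) :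
    (m:ℝ)^2 * ((93783563041:ℝ)/97280000000)^n ≤ 1/4 := by
  have hm2 : (2:ℝ) ≤ (m:ℝ) := by exact_mod_cast hm
  have hm1 : (1:ℝ) ≤ (m:ℝ) := by linarith
  have hm0 : (0:ℝ) < (m:ℝ) := by linarith
  have hlog : 0 ≤ Real.log m := Real.log_nonneg hm1
  set q : ℝ := (93783563041:ℝ)/97280000000 with hq
  clear_value q
  have hq0 : (0:ℝ) ≤ q := by rw [hq]; norm_num
  have hqe : q ≤ Real.exp (q - 1) := by
    have := Real.add_one_le_exp (q - 1)
    linarith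
  have h1 : q^n ≤ Real.exp ((n:ℝ) * (q-1)) := by
    calc q^n ≤ (Real.exp (q-1))^n := pow_le_pow_left₀ hq0 hqe n
      _ = Real.exp ((n:ℝ)*(q-1)) := by rw [← Real.exp_nat_mul]
  have h1q : (1:ℝ)/30 ≤ 1 - q := by rw [hq]; norm_num
  have h2 : (n:ℝ) * (q - 1) ≤ -(4 * Real.log m) := by
    have hmul : (120 * Real.log m) * (1/30) ≤ (n:ℝ) * (1 - q) :=
      mul_le_mul hn h1q (by norm_num) (le_trans (by positivity) hn)
    have hring : (n:ℝ)*(q-1) = -((n:ℝ)*(1-q)) := by ring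
    linarith
  have h3 : Real.exp (-(4 * Real.log m)) = ((m:ℝ)^4)⁻¹ := by
    rw [Real.exp_neg]
    congr 1
    rw [show (4:ℝ) * Real.log m = ((4:ℕ):ℝ) * Real.log m by norm_num,
      Real.exp_nat_mul, Real.exp_log hm0]
  have h4 : q^n ≤ ((m:ℝ)^4)⁻¹ := by
    rw [← h3]
    exact h1.trans (Real.exp_le_exp.mpr h2)
  have h5 : (4:ℝ) ≤ (m:ℝ)^2 := by nlinarith
  calc (m:ℝ)^2 * q^n ≤ (m:ℝ)^2 * ((m:ℝ)^4)⁻¹ := by gcongr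
    _ = ((m:ℝ)^2)⁻¹ := by field_simp
    _ ≤ 1/4 := by
        rw [one_div]
        exact inv_anti₀ (by norm_num) h5


/-- Chernoff plus union bound: there is a constant `C > 0` such that for every `m ≥ 2`,
every permutation `π` of `Fin m`, and every `n ≥ C · log m`, if `S₁, …, Sₙ` are independent
uniformly random subsets of `Fin m`, then with probability at least `3/4`, for every pair
`i, j` with `j ≠ π i`, at least `n/8` of the sets `Sₜ` satisfy `i ∈ Sₜ` and `π⁻¹ j ∉ Sₜ`. -/
theorem many_good_rows_whp :
    ∃ C : ℝ, C > 0 ∧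
      ∀ (m : ℕ), 2 ≤ m → ∀ (π : Equiv.Perm (Fin m)) (n : ℕ),
        (n : ℝ) ≥ C * Real.log m →
        (3 / 4 : ENNReal) ≤
          (PMF.uniformOfFintype (Fin n → Finset (Fin m))).toOuterMeasure
            {S | ∀ i j : Fin m, j ≠ π i →
              (n : ℝ) / 8 ≤
                ((Finset.univ.filter (fun t : Fin n => i ∈ S t ∧ π.symm j ∉ S t)).card : ℝ)} := by
  classical
  refine ⟨120, by norm_num, ?_⟩
  intro m hm π n hn
  set q : ℝ := (93783563041:ℝ)/97280000000 with hq
  set p : (Fin n → Finset (Fin m)) → Prop := fun S => ∀ i j : Fin m, j ≠ π i →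
      (n : ℝ) / 8 ≤
        ((Finset.univ.filter (fun t : Fin n => i ∈ S t ∧ π.symm j ∉ S t)).card : ℝ) with hp
  set N : ℕ := Fintype.card (Fin n → Finset (Fin m)) with hN
  have hNval : N = (2^m)^n := by
    rw [hN, Fintype.card_fun, Fintype.card_finset, Fintype.card_fin, Fintype.card_fin]
  have hNr : ((N:ℕ):ℝ) = ((2:ℝ)^m)^n := by rw [hNval]; push_cast; ring
  set G : Finset (Fin n → Finset (Fin m)) := univ.filter p with hG
  set Bd : Finset (Fin n → Finset (Fin m)) := univ.filter (fun S => ¬ p S) with hBd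
  have hsplit : G.card + Bd.card = N := by
    rw [hG, hBd, Finset.card_filter_add_card_filter_not, Finset.card_univ]
  -- union bound
  have hsub : Bd ⊆ (univ ×ˢ univ).biUnion (fun ij : Fin m × Fin m =>
      univ.filter (fun S : Fin n → Finset (Fin m) => ij.2 ≠ π ij.1 ∧
        8 * (univ.filter (fun t => ij.1 ∈ S t ∧ π.symm ij.2 ∉ S t)).card < n)) := by
    intro S hS
    rw [hBd, Finset.mem_filter] at hS
    have hS2 : ¬ p S := hS.2
    rw [hp] at hS2
    simp only at hS2
    push_neg at hS2
    obtain ⟨i, j, hij, hlt⟩ := hS2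
    rw [Finset.mem_biUnion]
    refine ⟨(i, j), Finset.mem_product.mpr ⟨Finset.mem_univ _, Finset.mem_univ _⟩, ?_⟩
    rw [Finset.mem_filter]
    refine ⟨Finset.mem_univ _, hij, ?_⟩
    have h8 : ((8 * (univ.filter (fun t => i ∈ S t ∧ π.symm j ∉ S t)).card : ℕ) : ℝ)
        < (n : ℝ) := by push_cast; linarith
    exact_mod_cast h8
  have hpair : ∀ ij : Fin m × Fin m,
      ((univ.filter (fun S : Fin n → Finset (Fin m) => ij.2 ≠ π ij.1 ∧
        8 * (univ.filter (fun t => ij.1 ∈ S t ∧ π.symm ij.2 ∉ S t)).card < n)).card : ℝ)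
      ≤ ((2:ℝ)^m)^n * q^n := by
    intro ij
    by_cases hij : ij.2 = π ij.1
    · have hempty : (univ.filter (fun S : Fin n → Finset (Fin m) => ij.2 ≠ π ij.1 ∧
          8 * (univ.filter (fun t => ij.1 ∈ S t ∧ π.symm ij.2 ∉ S t)).card < n)) = ∅ := by
        apply Finset.filter_false_of_mem
        intro S _
        simp [hij]
      rw [hempty]
      simp only [Finset.card_empty, Nat.cast_zero]
      positivity
    · have hib : ij.1 ≠ π.symm ij.2 := by
        intro h
        exact hij (by rw [h, Equiv.apply_symm_apply])
      have hsubf : (univ.filter (fun S : Fin n → Finset (Fin m) => ij.2 ≠ π ij.1 ∧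
            8 * (univ.filter (fun t => ij.1 ∈ S t ∧ π.symm ij.2 ∉ S t)).card < n))
          ⊆ (univ.filter (fun S : Fin n → Finset (Fin m) =>
            8 * (univ.filter (fun t => ij.1 ∈ S t ∧ π.symm ij.2 ∉ S t)).card < n)) := by
        intro S hS
        rw [Finset.mem_filter] at hS ⊢
        exact ⟨hS.1, hS.2.2⟩
      calc ((univ.filter _).card : ℝ) ≤ _ := Nat.cast_le.mpr (Finset.card_le_card hsubf)
        _ ≤ ((2:ℝ)^m)^n * q^n := badcard_le hm ij.1 (π.symm ij.2) hib
  have hBdcard : (Bd.card : ℝ) ≤ (m:ℝ)^2 * (((2:ℝ)^m)^n * q^n) := by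
    have h1 : (Bd.card : ℝ) ≤ ∑ ij ∈ univ ×ˢ univ,
        ((univ.filter (fun S : Fin n → Finset (Fin m) => ij.2 ≠ π ij.1 ∧
          8 * (univ.filter (fun t => ij.1 ∈ S t ∧ π.symm ij.2 ∉ S t)).card < n)).card : ℝ) := by
      push_cast [← Nat.cast_sum]
      exact_mod_cast le_trans (Finset.card_le_card hsub) (Finset.card_biUnion_le)
    refine le_trans h1 (le_trans (Finset.sum_le_sum (fun ij _ => hpair ij)) ?_)
    rw [Finset.sum_const]
    rw [nsmul_eq_mul]
    have : ((univ ×ˢ univ : Finset (Fin m × Fin m)).card : ℝ) = (m:ℝ)^2 := by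
      rw [Finset.card_product, Finset.card_univ, Fintype.card_fin]
      push_cast; ring
    rw [this]
  have hquarter : (Bd.card : ℝ) ≤ (N : ℝ) / 4 := by
    have hnum := numeric_bd hm hn
    rw [← hq] at hnum
    have : (m:ℝ)^2 * (((2:ℝ)^m)^n * q^n) = ((2:ℝ)^m)^n * ((m:ℝ)^2 * q^n) := by ring
    rw [this] at hBdcard
    have h2 : ((2:ℝ)^m)^n * ((m:ℝ)^2 * q^n) ≤ ((2:ℝ)^m)^n * (1/4) := by
      gcongr
    rw [hNr]
    linarith
  have h4Bd : 4 * Bd.card ≤ N := by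
    have : ((4 * Bd.card : ℕ) : ℝ) ≤ (N : ℝ) := by push_cast; linarith
    exact_mod_cast this
  have h3N : 3 * N ≤ 4 * G.card := by omega
  -- measure computation
  have hset : {S : Fin n → Finset (Fin m) | p S} = ↑G := by
    ext S
    simp [hG, hp]
  rw [show {S : Fin n → Finset (Fin m) | ∀ i j : Fin m, j ≠ π i →
        (n : ℝ) / 8 ≤
          ((Finset.univ.filter (fun t : Fin n => i ∈ S t ∧ π.symm j ∉ S t)).card : ℝ)}
      = ↑G from hset]
  rw [PMF.toOuterMeasure_apply_finset]
  simp only [PMF.uniformOfFintype_apply]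
  rw [Finset.sum_const, nsmul_eq_mul, ← hN]
  have hN0 : (N : ENNReal) ≠ 0 := Nat.cast_ne_zero.mpr (by rw [hN]; exact Fintype.card_ne_zero)
  have hNtop : (N : ENNReal) ≠ ⊤ := ENNReal.natCast_ne_top N
  rw [← div_eq_mul_inv]
  rw [ENNReal.le_div_iff_mul_le (Or.inl hN0) (Or.inl hNtop)]
  refine (ENNReal.mul_le_mul_iff_left (show (4:ENNReal) ≠ 0 by norm_num)
    (show (4:ENNReal) ≠ ⊤ by norm_num)).mp ?_
  have hcanc : (3/4 : ENNReal) * (N : ENNReal) * 4 = 3 * N := by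
    rw [mul_right_comm, ENNReal.div_mul_cancel (by norm_num) (by norm_num)]
  rw [hcanc]
  calc (3:ENNReal) * N = ((3*N : ℕ) : ENNReal) := by push_cast; ring
    _ ≤ ((4*G.card : ℕ) : ENNReal) := Nat.cast_le.mpr h3N
    _ = (G.card : ENNReal) * 4 := by push_cast; ring
end

section
/- There is a constant C > 0 with the following property. For every integer m ≥ 2 there exists n ≤ C · log m such that for every permutation Π of Fin m there is a database D_Π : Fin n → Fin (2m) → Bool, each of whose rows equals v_S for some S ⊆ Fin m, satisfying: for all i, j : Fin m, f_{{i, m+j}}(D_Π) = 0 if j = Π(i), and f_{{i, m+j}}(D_Π) ≥ 1/8 if j ≠ Π(i). In particular, the map Π ↦ D_Π is injective on permutations of Fin m. -/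
/-- The row `v_S` associated to a subset `S ⊆ Fin m` and a permutation `π` of `Fin m`:
the first half is the indicator of `S`, and the second half is the indicator of the image
under `π` of the complement of `S` (coordinate `m + j` is true iff `π⁻¹ j ∉ S`). -/
def vrow (m : ℕ) (π : Equiv.Perm (Fin m)) (S : Finset (Fin m)) : Fin (2 * m) → Bool :=
  fun x =>
    if h : (x : ℕ) < m then
      decide ((⟨(x : ℕ), h⟩ : Fin m) ∈ S)
    else
      decide (π.symm ⟨(x : ℕ) - m, by have := x.isLt; omega⟩ ∉ S)

def dH {N : ℕ} (u v : Fin N → Bool) : ℕ :=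
  (Finset.univ.filter (fun t => u t ≠ v t)).card

lemma sum_choose_bound (k : ℕ) :
    27 ^ k * ∑ s ∈ Finset.range k, (4 * k).choose s ≤ 256 ^ k := by
  have h27 : (27:ℕ) ^ k = 3 ^ (3 * k) := by
    rw [pow_mul]; norm_num
  have h256 : (256:ℕ) ^ k = 4 ^ (4 * k) := by
    rw [pow_mul]; norm_num
  rw [h27, h256, Finset.mul_sum]
  calc ∑ s ∈ Finset.range k, 3 ^ (3*k) * (4*k).choose s
      ≤ ∑ s ∈ Finset.range k, 1 ^ s * 3 ^ (4*k - s) * (4*k).choose s := by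
        apply Finset.sum_le_sum
        intro s hs
        simp only [one_pow, one_mul]
        have hs' : s < k := Finset.mem_range.mp hs
        exact Nat.mul_le_mul_right _ (Nat.pow_le_pow_right (by norm_num) (by omega))
    _ ≤ ∑ s ∈ Finset.range (4*k + 1), 1 ^ s * 3 ^ (4*k - s) * (4*k).choose s := by
        apply Finset.sum_le_sum_of_subset
        exact Finset.range_subset_range.mpr (by omega)
    _ = (1 + 3) ^ (4 * k) := (add_pow 1 3 (4*k)).symm
    _ = 4 ^ (4 * k) := by norm_num

lemma ball_card_le {N k : ℕ} (u : Fin N → Bool) :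
    (Finset.univ.filter (fun v : Fin N → Bool => dH u v < k)).card
      ≤ ∑ s ∈ Finset.range k, N.choose s := by
  classical
  set B := (Finset.range k).biUnion
    (fun s => Finset.powersetCard s (Finset.univ : Finset (Fin N))) with hB
  have h1 : (Finset.univ.filter (fun v : Fin N → Bool => dH u v < k)).card ≤ B.card := by
    apply Finset.card_le_card_of_injOn
      (fun v => Finset.univ.filter (fun t => u t ≠ v t))
    · intro v hv
      rw [Finset.mem_coe, Finset.mem_filter] at hv
      rw [Finset.mem_coe]
      rw [hB]
      apply Finset.mem_biUnion.mpr
      refine ⟨dH u v, Finset.mem_range.mpr hv.2, ?_⟩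
      rw [Finset.mem_powersetCard]
      exact ⟨Finset.subset_univ _, rfl⟩
    · intro v hv v' hv' h
      funext t
      simp only at h
      have ht : (u t ≠ v t) ↔ (u t ≠ v' t) := by
        constructor
        · intro h'
          have h2 : t ∈ Finset.univ.filter (fun t => u t ≠ v t) := by simp [h']
          rw [h] at h2
          simpa using h2
        · intro h'
          have h2 : t ∈ Finset.univ.filter (fun t => u t ≠ v' t) := by simp [h']
          rw [← h] at h2
          simpa using h2
      cases hu : u t <;> cases hvt : v t <;> cases hvt' : v' t <;> simp_all
  calc _ ≤ B.card := h1
    _ ≤ ∑ s ∈ Finset.range k, (Finset.powersetCard s (Finset.univ : Finset (Fin N))).card :=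
        Finset.card_biUnion_le
    _ = ∑ s ∈ Finset.range k, N.choose s := by
        apply Finset.sum_congr rfl
        intro s _
        rw [Finset.card_powersetCard, Finset.card_univ, Fintype.card_fin]

lemma exists_code (k m : ℕ) (hk : 0 < k) (hm : m * 256 ^ k ≤ 432 ^ k) :
    ∃ c : Fin m → (Fin (4 * k) → Bool), Function.Injective c ∧
      ∀ i i' : Fin m, i ≠ i' → k ≤ dH (c i) (c i') := by
  classical
  -- maximal code
  set good : Finset (Fin (4*k) → Bool) → Prop :=
    fun C => ∀ u ∈ C, ∀ v ∈ C, u ≠ v → k ≤ dH u v with hgood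
  have hne : (Finset.univ.filter (fun C : Finset (Fin (4*k) → Bool) => good C)).Nonempty := by
    refine ⟨∅, ?_⟩
    simp [hgood]
  obtain ⟨C, hCmem, hCmax⟩ := Finset.exists_max_image _ Finset.card hne
  rw [Finset.mem_filter] at hCmem
  have hC : good C := hCmem.2
  -- covering property
  have hcover : ∀ v : Fin (4*k) → Bool, ∃ u ∈ C, dH u v < k := by
    intro v
    by_contra hcon
    push_neg at hcon
    have hvC : v ∉ C := by
      intro hvC
      have := hcon v hvC
      simp [dH] at this
      omega
    have hgood' : good (insert v C) := by
      intro a ha b hb hab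
      rw [Finset.mem_insert] at ha hb
      have hsymm : ∀ x y : Fin (4*k) → Bool, dH x y = dH y x := by
        intro x y
        apply Finset.card_nbij id
        · intro t ht; simp at ht ⊢; exact fun h => ht h.symm
        · intro t ht t' ht' h; exact h
        · intro t ht; refine ⟨t, ?_, rfl⟩; simp at ht ⊢; exact fun h => ht h.symm
      rcases ha with ha | ha <;> rcases hb with hb | hb
      · exact absurd (ha.trans hb.symm) hab
      · subst ha; rw [hsymm]; exact hcon b hb
      · subst hb; exact hcon a ha
      · exact hC a ha b hb hab
    have hle := hCmax (insert v C) (by simpa using hgood')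
    rw [Finset.card_insert_of_notMem hvC] at hle
    omega
  -- counting
  have hcount : 2 ^ (4*k) ≤ C.card * ∑ s ∈ Finset.range k, (4*k).choose s := by
    have hsub : (Finset.univ : Finset (Fin (4*k) → Bool)) ⊆
        C.biUnion (fun u => Finset.univ.filter (fun v => dH u v < k)) := by
      intro v _
      obtain ⟨u, hu, hd⟩ := hcover v
      exact Finset.mem_biUnion.mpr ⟨u, hu, by simp [hd]⟩
    calc 2 ^ (4*k) = (Finset.univ : Finset (Fin (4*k) → Bool)).card := by
          rw [Finset.card_univ, Fintype.card_fun]; simp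
      _ ≤ (C.biUnion (fun u => Finset.univ.filter (fun v => dH u v < k))).card :=
          Finset.card_le_card hsub
      _ ≤ ∑ u ∈ C, (Finset.univ.filter (fun v => dH u v < k)).card := Finset.card_biUnion_le
      _ ≤ ∑ u ∈ C, ∑ s ∈ Finset.range k, (4*k).choose s :=
          Finset.sum_le_sum (fun u _ => ball_card_le u)
      _ = C.card * ∑ s ∈ Finset.range k, (4*k).choose s := by
          rw [Finset.sum_const, smul_eq_mul]
  -- m ≤ C.card
  have hmC : m ≤ C.card := by
    have h1 : m * 256 ^ k ≤ C.card * 256 ^ k := by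
      calc m * 256 ^ k ≤ 432 ^ k := hm
        _ = 2 ^ (4*k) * 27 ^ k := by
            rw [pow_mul]
            rw [← mul_pow]
            norm_num
        _ ≤ (C.card * ∑ s ∈ Finset.range k, (4*k).choose s) * 27 ^ k :=
            Nat.mul_le_mul_right _ hcount
        _ = C.card * (27 ^ k * ∑ s ∈ Finset.range k, (4*k).choose s) := by ring
        _ ≤ C.card * 256 ^ k := Nat.mul_le_mul_left _ (sum_choose_bound k)
    exact Nat.le_of_mul_le_mul_right h1 (by positivity)
  obtain ⟨C', hC'sub, hC'card⟩ := Finset.exists_subset_card_eq hmC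
  refine ⟨fun i => (C'.equivFin.symm (Fin.cast hC'card.symm i) : _), ?_, ?_⟩
  · intro i i' h
    have : Fin.cast hC'card.symm i = Fin.cast hC'card.symm i' := by
      apply C'.equivFin.symm.injective
      exact Subtype.ext h
    have h3 := congrArg Fin.val this
    exact Fin.ext (by simpa using h3)
  · intro i i' hii
    apply hC _ (hC'sub (C'.equivFin.symm (Fin.cast hC'card.symm i)).2)
      _ (hC'sub (C'.equivFin.symm (Fin.cast hC'card.symm i')).2)
    intro heq
    apply hii
    have : Fin.cast hC'card.symm i = Fin.cast hC'card.symm i' := by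
      apply C'.equivFin.symm.injective
      exact Subtype.ext heq
    have h3 := congrArg Fin.val this
    exact Fin.ext (by simpa using h3)

def Srow (m k : ℕ) (c : Fin m → Fin (4 * k) → Bool) (t : Fin (8 * k)) : Finset (Fin m) :=
  if h : (t : ℕ) < 4 * k then
    Finset.univ.filter (fun a => c a ⟨(t : ℕ), h⟩ = true)
  else
    Finset.univ.filter (fun a => c a ⟨(t : ℕ) - 4 * k, by have := t.isLt; omega⟩ = false)

lemma vrow_lo (m : ℕ) (π : Equiv.Perm (Fin m)) (S : Finset (Fin m)) (i : Fin m)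
    (h : (i : ℕ) < 2 * m) :
    vrow m π S ⟨(i : ℕ), h⟩ = decide (i ∈ S) := by
  simp only [vrow]
  rw [dif_pos (show ((⟨(i : ℕ), h⟩ : Fin (2 * m)) : ℕ) < m from i.isLt)]

lemma vrow_hi (m : ℕ) (π : Equiv.Perm (Fin m)) (S : Finset (Fin m)) (j : Fin m)
    (h : m + (j : ℕ) < 2 * m) :
    vrow m π S ⟨m + (j : ℕ), h⟩ = decide (π.symm j ∉ S) := by
  simp only [vrow]
  rw [dif_neg (by simp)]
  have harg : ∀ hh, (⟨m + (j : ℕ) - m, hh⟩ : Fin m) = j := by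
    intro hh; apply Fin.ext; simp
  simp [harg]

lemma mem_Srow_lo {m k : ℕ} (c : Fin m → Fin (4 * k) → Bool) (t : Fin (4 * k))
    (h : (t : ℕ) < 8 * k) (a : Fin m) :
    a ∈ Srow m k c ⟨(t : ℕ), h⟩ ↔ c a t = true := by
  simp only [Srow]
  rw [dif_pos (show ((⟨(t : ℕ), h⟩ : Fin (8 * k)) : ℕ) < 4 * k from t.isLt)]
  simp

lemma mem_Srow_hi {m k : ℕ} (c : Fin m → Fin (4 * k) → Bool) (t : Fin (4 * k))
    (h : 4 * k + (t : ℕ) < 8 * k) (a : Fin m) :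
    a ∈ Srow m k c ⟨4 * k + (t : ℕ), h⟩ ↔ c a t = false := by
  simp only [Srow]
  rw [dif_neg (by simp)]
  have harg : ∀ hh, (⟨4 * k + (t : ℕ) - 4 * k, hh⟩ : Fin (4 * k)) = t := by
    intro hh; apply Fin.ext; simp
  simp [harg]


/-- There is a constant `C > 0` such that for every `m ≥ 2` there is a number of rows
`n ≤ C · log m` and, for each permutation `π` of `Fin m`, a database `D_π` with `n` rows,
each row of the form `v_S`, whose pairwise frequencies `f_{{i, m+j}}` are `0` when
`j = π i` and at least `1/8` when `j ≠ π i`; moreover `π ↦ D_π` is injective. -/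
theorem encode_permutation_in_database :
    ∃ C : ℝ, C > 0 ∧
      ∀ m : ℕ, 2 ≤ m →
        ∃ n : ℕ, (n : ℝ) ≤ C * Real.log m ∧
          ∃ Dmap : Equiv.Perm (Fin m) → (Fin n → Fin (2 * m) → Bool),
            Function.Injective Dmap ∧
            ∀ π : Equiv.Perm (Fin m),
              (∀ t : Fin n, ∃ S : Finset (Fin m), Dmap π t = vrow m π S) ∧
              ∀ i j : Fin m,
                (j = π i →
                  freq (Dmap π) {⟨(i : ℕ), by have := i.isLt; omega⟩,
                    ⟨m + (j : ℕ), by have := j.isLt; omega⟩} = 0) ∧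
                (j ≠ π i →
                  freq (Dmap π) {⟨(i : ℕ), by have := i.isLt; omega⟩,
                    ⟨m + (j : ℕ), by have := j.isLt; omega⟩} ≥ 1 / 8) := by
  refine ⟨200, by norm_num, ?_⟩
  intro m hm
  set j := Nat.clog 2 m with hj
  have hj1 : 1 ≤ j := Nat.clog_pos (by norm_num) hm
  set k := 7 * j with hk
  have hk0 : 0 < k := by omega
  have hm2j : m ≤ 2 ^ j := Nat.le_pow_clog (by norm_num) m
  have hmk : m * 256 ^ k ≤ 432 ^ k := by
    calc m * 256 ^ k ≤ 2 ^ j * 256 ^ (7 * j) := Nat.mul_le_mul_right _ hm2j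
      _ = 2 ^ j * (256 ^ 7) ^ j := by rw [pow_mul]
      _ = (2 * 256 ^ 7) ^ j := by rw [mul_pow]
      _ ≤ (432 ^ 7) ^ j := Nat.pow_le_pow_left (by norm_num) j
      _ = 432 ^ k := by rw [← pow_mul]
  obtain ⟨c, hcinj, hcdist⟩ := exists_code k m hk0 hmk
  refine ⟨8 * k, ?_, ?_⟩
  · -- n ≤ 200 log m
    have hL1 : 1 ≤ Nat.log 2 m := Nat.log_pos (by norm_num) hm
    have hjL : j ≤ Nat.log 2 m + 1 := by
      rw [hj]
      exact (Nat.clog_le_iff_le_pow (by norm_num)).mpr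
        (le_of_lt (Nat.lt_pow_succ_log_self (by norm_num) m))
    have hlog2 : (Nat.log 2 m : ℝ) * Real.log 2 ≤ Real.log m := by
      have h2L : ((2 : ℝ) ^ (Nat.log 2 m)) ≤ (m : ℝ) := by
        exact_mod_cast Nat.pow_log_le_self 2 (by omega)
      have := Real.log_le_log (by positivity) h2L
      rwa [Real.log_pow] at this
    have hlt : (0.6931471803 : ℝ) < Real.log 2 := Real.log_two_gt_d9
    have hjr : (j : ℝ) ≤ (Nat.log 2 m : ℝ) + 1 := by exact_mod_cast hjL
    have hLr : (1 : ℝ) ≤ (Nat.log 2 m : ℝ) := by exact_mod_cast hL1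
    push_cast
    rw [hk]
    push_cast
    nlinarith [hlog2, hlt, hjr, hLr]
  · -- the database
    refine ⟨fun π t => vrow m π (Srow m k c t), ?_, ?_⟩
    · -- injectivity
      intro π π' hD
      have hsymm : ∀ j0 : Fin m, π.symm j0 = π'.symm j0 := by
        intro j0
        by_contra hne
        have hd := hcdist _ _ hne
        have hpos : 0 < dH (c (π.symm j0)) (c (π'.symm j0)) := lt_of_lt_of_le hk0 hd
        obtain ⟨t, ht⟩ := Finset.card_pos.mp hpos
        rw [Finset.mem_filter] at ht
        have htne : c (π.symm j0) t ≠ c (π'.symm j0) t := ht.2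
        have hrow : (t : ℕ) < 8 * k := by have := t.isLt; omega
        have hEv := congrFun (congrFun hD ⟨(t : ℕ), hrow⟩)
          ⟨m + (j0 : ℕ), by have := j0.isLt; omega⟩
        simp only at hEv
        rw [vrow_hi, vrow_hi, decide_eq_decide] at hEv
        have h1 := mem_Srow_lo c t hrow (π.symm j0)
        have h2 := mem_Srow_lo c t hrow (π'.symm j0)
        apply htne
        cases hb : c (π.symm j0) t <;> cases hb' : c (π'.symm j0) t <;> simp_all
      have h2 : π.symm = π'.symm := Equiv.ext hsymm
      calc π = π.symm.symm := (Equiv.symm_symm π).symm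
        _ = π'.symm.symm := by rw [h2]
        _ = π' := Equiv.symm_symm π'
    · intro π
      refine ⟨fun t => ⟨Srow m k c t, rfl⟩, ?_⟩
      intro i j0
      constructor
      · -- j0 = π i → freq = 0
        intro hj0
        have hempty : (Finset.univ.filter (fun t : Fin (8 * k) =>
            ∀ x ∈ ({⟨(i : ℕ), by have := i.isLt; omega⟩,
              ⟨m + (j0 : ℕ), by have := j0.isLt; omega⟩} : Finset (Fin (2 * m))),
              vrow m π (Srow m k c t) x = true)) = ∅ := by
          rw [Finset.eq_empty_iff_forall_notMem]
          intro t ht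
          rw [Finset.mem_filter] at ht
          have h1 := ht.2 ⟨(i : ℕ), by have := i.isLt; omega⟩ (by simp)
          have h2 := ht.2 ⟨m + (j0 : ℕ), by have := j0.isLt; omega⟩ (by simp)
          rw [vrow_lo] at h1
          rw [vrow_hi] at h2
          rw [decide_eq_true_eq] at h1 h2
          rw [hj0, Equiv.symm_apply_apply] at h2
          exact h2 h1
        unfold freq
        rw [hempty]
        simp
      · -- j0 ≠ π i → freq ≥ 1/8
        intro hj0
        set i' := π.symm j0 with hi'
        have hii' : i ≠ i' := by
          intro h
          apply hj0
          rw [h, hi']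
          simp
        have hcard : k ≤ (Finset.univ.filter (fun t : Fin (8 * k) =>
            ∀ x ∈ ({⟨(i : ℕ), by have := i.isLt; omega⟩,
              ⟨m + (j0 : ℕ), by have := j0.isLt; omega⟩} : Finset (Fin (2 * m))),
              vrow m π (Srow m k c t) x = true)).card := by
          refine le_trans (hcdist i i' hii') ?_
          apply Finset.card_le_card_of_injOn
            (fun t : Fin (4 * k) => if c i t = true then
              (⟨(t : ℕ), by have := t.isLt; omega⟩ : Fin (8 * k))
              else ⟨4 * k + (t : ℕ), by have := t.isLt; omega⟩)
          · intro t ht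
            rw [Finset.mem_coe, Finset.mem_filter] at ht
            have htne := ht.2
            rw [Finset.mem_coe, Finset.mem_filter]; beta_reduce
            refine ⟨Finset.mem_univ _, ?_⟩
            intro x hx
            rw [Finset.mem_insert, Finset.mem_singleton] at hx
            by_cases hci : c i t = true
            · have hci' : c i' t = false := by
                cases hb : c i' t
                · rfl
                · exact absurd (hci.trans hb.symm) htne
              rw [if_pos hci]
              rcases hx with hx | hx <;> subst hx
              · rw [vrow_lo, decide_eq_true_eq]
                rw [mem_Srow_lo c t (by have := t.isLt; omega)]
                exact hci
              · rw [vrow_hi, decide_eq_true_eq, ← hi']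
                rw [mem_Srow_lo c t (by have := t.isLt; omega)]
                simp [hci']
            · have hci2 : c i t = false := by
                cases hb : c i t
                · rfl
                · exact absurd hb hci
              have hci' : c i' t = true := by
                cases hb : c i' t
                · exact absurd (hci2.trans hb.symm) htne
                · rfl
              rw [if_neg hci]
              rcases hx with hx | hx <;> subst hx
              · rw [vrow_lo, decide_eq_true_eq]
                rw [mem_Srow_hi c t (by have := t.isLt; omega)]
                exact hci2
              · rw [vrow_hi, decide_eq_true_eq, ← hi']
                rw [mem_Srow_hi c t (by have := t.isLt; omega)]
                simp [hci']
          · intro t ht t' ht' h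
            by_cases h1 : c i t = true <;> by_cases h2 : c i t' = true <;>
              simp only [if_pos, if_neg, h1, h2, if_true, if_false] at h <;>
              [skip; skip; skip; skip] <;>
              · have := congrArg Fin.val h
                simp at this
                have hlt := t.isLt
                have hlt' := t'.isLt
                exact Fin.ext (by omega)
        unfold freq
        rw [ge_iff_le, div_le_div_iff₀ (by norm_num) (by positivity)]
        push_cast
        have : (k : ℝ) ≤ ((Finset.univ.filter (fun t : Fin (8 * k) =>
            ∀ x ∈ ({⟨(i : ℕ), by have := i.isLt; omega⟩,
              ⟨m + (j0 : ℕ), by have := j0.isLt; omega⟩} : Finset (Fin (2 * m))),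
              vrow m π (Srow m k c t) x = true)).card : ℝ) := by exact_mod_cast hcard
        nlinarith [this]
end

section
/- Let m, r be positive integers, d = 2·m·r, and fix permutations Π_{k,l} of Fin m for k, l ∈ Fin r. For every k, l ∈ Fin r, every i : Fin m, every k' ∈ Fin r and every S ⊆ Fin m, if j = Π_{k,l}(i) then it is not the case that both v_{k',S}(k·m + i) = true and v_{k',S}(m·r + l·m + j) = true. Consequently, for any database D all of whose rows are of the form v_{k',S}, the frequency f_{T_{k,l}(i, Π_{k,l}(i))}(D) = 0. -/
/-- The coordinate `k·m + i` (in the first half) of `Fin (2·m·r)`. -/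
def idxL (m r : ℕ) (k : Fin r) (i : Fin m) : Fin (2 * m * r) :=
  ⟨(k : ℕ) * m + (i : ℕ), by
    have h1 : ((k : ℕ) + 1) * m ≤ r * m := Nat.mul_le_mul (Nat.succ_le_of_lt k.isLt) (le_refl m)
    have h2 : (i : ℕ) < m := i.isLt
    nlinarith⟩

/-- The coordinate `m·r + l·m + j` (in the second half) of `Fin (2·m·r)`. -/
def idxR (m r : ℕ) (l : Fin r) (j : Fin m) : Fin (2 * m * r) :=
  ⟨m * r + (l : ℕ) * m + (j : ℕ), by
    have h1 : ((l : ℕ) + 1) * m ≤ r * m := Nat.mul_le_mul (Nat.succ_le_of_lt l.isLt) (le_refl m)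
    have h2 : (j : ℕ) < m := j.isLt
    nlinarith⟩

/-- The row `v_{k,S}` associated to a block `k ∈ Fin r`, a subset `S ⊆ Fin m`, and a family
of permutations `π k l` of `Fin m`: on the first half, coordinate `k·m + i` is true iff
`i ∈ S` (and coordinates outside block `k` are false); on the second half, coordinate
`m·r + l·m + j` is true iff `(π k l)⁻¹ j ∉ S`. -/
def vrow2 (m r : ℕ) (hm : 0 < m) (π : Fin r → Fin r → Equiv.Perm (Fin m)) (k : Fin r)
    (S : Finset (Fin m)) : Fin (2 * m * r) → Bool :=
  fun x =>
    if h : (x : ℕ) < m * r then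
      decide ((x : ℕ) / m = (k : ℕ)) &&
        decide ((⟨(x : ℕ) % m, Nat.mod_lt _ hm⟩ : Fin m) ∈ S)
    else
      decide
        ((π k ⟨((x : ℕ) - m * r) / m, by
            have hx := x.isLt
            have h2 : 2 * m * r = m * r + m * r := by ring
            have h3 : r * m = m * r := Nat.mul_comm r m
            exact (Nat.div_lt_iff_lt_mul hm).mpr (by omega)⟩).symm
          ⟨((x : ℕ) - m * r) % m, Nat.mod_lt _ hm⟩ ∉ S)

theorem vrow2_never_cooccurs (m r : ℕ) (hm : 0 < m) (hr : 0 < r)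
    (π : Fin r → Fin r → Equiv.Perm (Fin m)) :
    (∀ (k l : Fin r) (i : Fin m) (k' : Fin r) (S : Finset (Fin m)),
      ¬(vrow2 m r hm π k' S (idxL m r k i) = true ∧
        vrow2 m r hm π k' S (idxR m r l (π k l i)) = true)) ∧
    (∀ (n : ℕ) (D : Fin n → Fin (2 * m * r) → Bool),
      (∀ t : Fin n, ∃ (k' : Fin r) (S : Finset (Fin m)), D t = vrow2 m r hm π k' S) →
      ∀ (k l : Fin r) (i : Fin m),
        freq D {idxL m r k i, idxR m r l (π k l i)} = 0) := by
  have key : ∀ (k l : Fin r) (i : Fin m) (k' : Fin r) (S : Finset (Fin m)),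
      ¬(vrow2 m r hm π k' S (idxL m r k i) = true ∧
        vrow2 m r hm π k' S (idxR m r l (π k l i)) = true) := by
    intro k l i k' S ⟨hL, hR⟩
    have hkL : ((idxL m r k i : Fin (2*m*r)) : ℕ) = (k : ℕ) * m + (i : ℕ) := rfl
    have hLlt : ((idxL m r k i : Fin (2*m*r)) : ℕ) < m * r := by
      have h1 : ((k : ℕ) + 1) * m ≤ r * m := mul_le_mul_left (Nat.succ_le_of_lt k.isLt) m
      have h2 : (i : ℕ) < m := i.isLt
      rw [hkL]; nlinarith
    have hRv : ((idxR m r l (π k l i) : Fin (2*m*r)) : ℕ)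
        = m * r + (l : ℕ) * m + ((π k l i : Fin m) : ℕ) := rfl
    have hRge : ¬ ((idxR m r l (π k l i) : Fin (2*m*r)) : ℕ) < m * r := by
      rw [hRv, not_lt]; omega
    rw [vrow2, dif_pos hLlt] at hL
    rw [vrow2, dif_neg hRge] at hR
    simp only [Bool.and_eq_true, decide_eq_true_eq] at hL hR
    have hdiv : ((idxL m r k i : Fin (2*m*r)) : ℕ) / m = (k : ℕ) := by
      rw [hkL, Nat.mul_comm (k : ℕ) m, Nat.mul_add_div hm, Nat.div_eq_of_lt i.isLt, Nat.add_zero]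
    have hmod : ((idxL m r k i : Fin (2*m*r)) : ℕ) % m = (i : ℕ) := by
      rw [hkL, Nat.mul_comm (k : ℕ) m, Nat.mul_add_mod, Nat.mod_eq_of_lt i.isLt]
    have hk' : k' = k := Fin.ext (hdiv ▸ hL.1).symm
    have hfin0 : (⟨((idxL m r k i : Fin (2*m*r)) : ℕ) % m, Nat.mod_lt _ hm⟩ : Fin m) = i :=
      Fin.ext hmod
    have hiS : i ∈ S := hfin0 ▸ hL.2
    rw [hk'] at hR
    have hsub : ((idxR m r l (π k l i) : Fin (2*m*r)) : ℕ) - m * r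
        = m * (l : ℕ) + ((π k l i : Fin m) : ℕ) := by
      rw [hRv, Nat.mul_comm (l : ℕ) m]; omega
    have hdiv2 : (((idxR m r l (π k l i) : Fin (2*m*r)) : ℕ) - m * r) / m = (l : ℕ) := by
      rw [hsub, Nat.mul_add_div hm, Nat.div_eq_of_lt (π k l i).isLt, Nat.add_zero]
    have hmod2 : (((idxR m r l (π k l i) : Fin (2*m*r)) : ℕ) - m * r) % m
        = ((π k l i : Fin m) : ℕ) := by
      rw [hsub, Nat.mul_add_mod, Nat.mod_eq_of_lt (π k l i).isLt]
    have hfin1 : ∀ h, (⟨(((idxR m r l (π k l i) : Fin (2*m*r)) : ℕ) - m * r) / m, h⟩ : Fin r)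
        = l := fun h => Fin.ext hdiv2
    have hfin2 : (⟨(((idxR m r l (π k l i) : Fin (2*m*r)) : ℕ) - m * r) % m,
        Nat.mod_lt _ hm⟩ : Fin m) = π k l i := Fin.ext hmod2
    rw [hfin1, hfin2] at hR
    simp only [Equiv.symm_apply_apply] at hR
    exact hR hiS
  refine ⟨key, ?_⟩
  intro n D hD k l i
  unfold freq
  have : (Finset.univ.filter (fun t : Fin n =>
      ∀ j ∈ ({idxL m r k i, idxR m r l (π k l i)} : Finset (Fin (2*m*r))), D t j = true)) = ∅ := by
    rw [Finset.filter_eq_empty_iff]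
    intro t _ h
    obtain ⟨k', S, hkS⟩ := hD t
    exact key k l i k' S ⟨by rw [← hkS]; exact h _ (by simp), by rw [← hkS]; exact h _ (by simp)⟩
  rw [this]
  simp
end

section
/- Let m, r be positive integers, d = 2·m·r, and fix permutations Π_{k,l} of Fin m for k, l ∈ Fin r. Fix k, l ∈ Fin r and i, j : Fin m. (1) If k' ∈ Fin r with k' ≠ k, then for every S ⊆ Fin m, v_{k',S}(k·m + i) = false, so the itemset T_{k,l}(i,j) never appears in the row v_{k',S}. (2) If j ≠ Π_{k,l}(i) and S is drawn uniformly at random from subsets of Fin m, then the probability that both v_{k,S}(k·m + i) = true and v_{k,S}(m·r + l·m + j) = true equals 1/4. -/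
open scoped ENNReal

lemma count_aux {m : ℕ} (a b : Fin m) (hab : b ≠ a) :
    (Finset.univ.filter (fun S : Finset (Fin m) => a ∈ S ∧ b ∉ S)).card = 2 ^ (m - 2) := by
  classical
  have hcard : (((Finset.univ : Finset (Fin m)).erase b).erase a).card = m - 2 := by
    rw [Finset.card_erase_of_mem (by simp [Finset.mem_erase]; exact fun h => hab h.symm),
      Finset.card_erase_of_mem (Finset.mem_univ b), Finset.card_univ, Fintype.card_fin]
    omega
  rw [← hcard, ← Finset.card_powerset]
  refine Finset.card_bij' (fun S _ => S.erase a) (fun T _ => insert a T) ?_ ?_ ?_ ?_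
  · intro S hS
    simp only [Finset.mem_filter, Finset.mem_univ, true_and] at hS
    simp only [Finset.mem_powerset]
    intro x hx
    simp only [Finset.mem_erase] at hx ⊢
    exact ⟨hx.1, fun hxb => hS.2 (hxb ▸ hx.2), Finset.mem_univ x⟩
  · intro T hT
    simp only [Finset.mem_powerset] at hT
    simp only [Finset.mem_filter, Finset.mem_univ, true_and]
    refine ⟨Finset.mem_insert_self a T, ?_⟩
    intro hb
    rcases Finset.mem_insert.mp hb with h | h
    · exact hab h
    · have := hT h
      simp at this
  · intro S hS
    simp only [Finset.mem_filter, Finset.mem_univ, true_and] at hS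
    exact Finset.insert_erase hS.1
  · intro T hT
    simp only [Finset.mem_powerset] at hT
    apply Finset.erase_insert
    intro ha
    have := hT ha
    simp at this

lemma vrow2_idxL (m r : ℕ) (hm : 0 < m) (π : Fin r → Fin r → Equiv.Perm (Fin m))
    (k k' : Fin r) (i : Fin m) (S : Finset (Fin m)) :
    vrow2 m r hm π k' S (idxL m r k i) = (decide ((k : ℕ) = (k' : ℕ)) && decide (i ∈ S)) := by
  have hlt : ((idxL m r k i : Fin (2*m*r)) : ℕ) < m * r := by
    have h1 : ((k : ℕ) + 1) * m ≤ r * m := mul_le_mul_left (Nat.succ_le_of_lt k.isLt) m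
    have h2 : (i : ℕ) < m := i.isLt
    simp only [idxL]
    nlinarith
  have hval : ((idxL m r k i : Fin (2*m*r)) : ℕ) = m * (k : ℕ) + (i : ℕ) := by
    simp [idxL]; ring
  rw [vrow2, dif_pos hlt]
  have hdiv : ((idxL m r k i : Fin (2*m*r)) : ℕ) / m = (k : ℕ) := by
    rw [hval, Nat.mul_add_div hm, Nat.div_eq_of_lt i.isLt]
    omega
  have hmod : ((idxL m r k i : Fin (2*m*r)) : ℕ) % m = (i : ℕ) := by
    rw [hval, Nat.mul_add_mod, Nat.mod_eq_of_lt i.isLt]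
  congr 1
  · rw [hdiv]
  · congr 1
    · exact congrArg _ (Fin.ext hmod)

lemma vrow2_idxR (m r : ℕ) (hm : 0 < m) (π : Fin r → Fin r → Equiv.Perm (Fin m))
    (k l : Fin r) (j : Fin m) (S : Finset (Fin m)) :
    vrow2 m r hm π k S (idxR m r l j) = decide ((π k l).symm j ∉ S) := by
  have hnlt : ¬ ((idxR m r l j : Fin (2*m*r)) : ℕ) < m * r := by
    simp only [idxR]
    omega
  rw [vrow2]
  simp only [dif_neg hnlt]
  rw [decide_eq_decide]
  have hsub : ((idxR m r l j : Fin (2*m*r)) : ℕ) - m * r = m * (l : ℕ) + (j : ℕ) := by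
    simp only [idxR]
    rw [Nat.mul_comm (l : ℕ) m]
    omega
  have hdiv : (((idxR m r l j : Fin (2*m*r)) : ℕ) - m * r) / m = (l : ℕ) := by
    rw [hsub, Nat.mul_add_div hm, Nat.div_eq_of_lt j.isLt]
    omega
  have hmod : (((idxR m r l j : Fin (2*m*r)) : ℕ) - m * r) % m = (j : ℕ) := by
    rw [hsub, Nat.mul_add_mod, Nat.mod_eq_of_lt j.isLt]
  have e1 : ∀ h, (⟨(((idxR m r l j : Fin (2*m*r)) : ℕ) - m * r) / m, h⟩ : Fin r) = l :=
    fun h => Fin.ext hdiv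
  have e2 : ∀ h, (⟨(((idxR m r l j : Fin (2*m*r)) : ℕ) - m * r) % m, h⟩ : Fin m) = j :=
    fun h => Fin.ext hmod
  rw [e1, e2]

theorem vrow2_block_structure (m r : ℕ) (hm : 0 < m)
    (π : Fin r → Fin r → Equiv.Perm (Fin m)) (k l : Fin r) (i j : Fin m) :
    (∀ k' : Fin r, k' ≠ k → ∀ S : Finset (Fin m),
      vrow2 m r hm π k' S (idxL m r k i) = false) ∧
    (j ≠ π k l i →
      (PMF.uniformOfFintype (Finset (Fin m))).toOuterMeasure
        {S | vrow2 m r hm π k S (idxL m r k i) = true ∧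
             vrow2 m r hm π k S (idxR m r l j) = true} = 1 / 4) := by
  classical
  constructor
  · intro k' hk' S
    rw [vrow2_idxL]
    have : (k : ℕ) ≠ (k' : ℕ) := fun h => hk' (Fin.ext h.symm)
    simp [this]
  · intro hj
    set b : Fin m := (π k l).symm j with hb
    have hab : b ≠ i := fun h => hj (by rw [← (π k l).apply_symm_apply j, ← hb, h])
    have hm2 : 2 ≤ m := by
      have h1 := i.isLt
      have h2 := b.isLt
      have : (b : ℕ) ≠ (i : ℕ) := fun h => hab (Fin.ext h)
      omega
    have hset : {S : Finset (Fin m) | vrow2 m r hm π k S (idxL m r k i) = true ∧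
        vrow2 m r hm π k S (idxR m r l j) = true} =
        ↑(Finset.univ.filter (fun S : Finset (Fin m) => i ∈ S ∧ b ∉ S)) := by
      ext S
      simp [vrow2_idxL, vrow2_idxR, hb]
    rw [hset, PMF.toOuterMeasure_uniformOfFintype_apply]
    simp only [Finset.coe_sort_coe, Fintype.card_coe]
    rw [count_aux i b hab]
    have hcard : Fintype.card (Finset (Fin m)) = 2 ^ m := by
      rw [Fintype.card_finset, Fintype.card_fin]
    rw [hcard]
    push_cast
    rw [show ((2:ℝ≥0∞)) ^ m = 2 ^ (m-2) * 4 from by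
      rw [show m = (m - 2) + 2 from by omega, pow_add]; norm_num]
    rw [ENNReal.div_eq_inv_mul, ENNReal.mul_inv (by left; positivity) (by left; norm_num)]
    rw [mul_right_comm, ENNReal.inv_mul_cancel (by positivity)
      (ENNReal.pow_ne_top (by norm_num)), one_mul, one_div]
end
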